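/- arXiv:2502.06267 — 7 statements merged into one kernel-verified Lean document; each statement's English description precedes it below -/
import Mathlib

section
/- For any α ∈ M(T, η̄) (right-continuous nondecreasing function with α(0)=0 and α(t+T)=α(t)+α(T)=α(t)+Tη̄), the function S(t) = e^{-α(t)-δt} ∫₀ᵀ K(t,r) c(r) e^{α(r)+δr} dr satisfies 0 ≤ S(t) ≤ ‖c‖_{L¹[0,T]} / (1 - e^{-(η̄+δ)T}) for all t ∈ [0,T), where K(t,r) = (1-e^{-(η̄+δ)T})⁻¹ for r < t and K(t,r) = (e^{(η̄+δ)T}-1)⁻¹ for r ≥ t. -/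
open MeasureTheory intervalIntegral Real Set Filter Topology

noncomputable def Kker (T δ ηb t r : ℝ) : ℝ :=
  if r < t then (1 - Real.exp (-(ηb + δ) * T))⁻¹ else (Real.exp ((ηb + δ) * T) - 1)⁻¹

noncomputable def Sfun (T δ ηb : ℝ) (c α : ℝ → ℝ) (t : ℝ) : ℝ :=
  Real.exp (-(α t) - δ * t) * ∫ r in (0:ℝ)..T, Kker T δ ηb t r * c r * Real.exp (α r + δ * r)

noncomputable def Phi (T δ ηb : ℝ) (c w α : ℝ → ℝ) : ℝ :=
  ∫ t in (0:ℝ)..T, w t * Sfun T δ ηb c α t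

def MemM (T ηb : ℝ) (α : ℝ → ℝ) : Prop :=
  Monotone α ∧ (∀ t, ContinuousWithinAt α (Set.Ici t) t) ∧ α 0 = 0 ∧
    (∀ t, α (t + T) = α t + α T) ∧ α T = T * ηb

noncomputable def hfun (T δ ηb : ℝ) (c w α : ℝ → ℝ) (t : ℝ) : ℝ :=
  w t * Real.exp (-(α t) - δ * t) *
      (∫ r in (0:ℝ)..T, Kker T δ ηb t r * c r * Real.exp (α r + δ * r)) -
    c t * Real.exp (α t + δ * t) *
      (∫ r in (0:ℝ)..T, Kker T δ ηb r t * w r * Real.exp (-(α r) - δ * r))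

noncomputable def psi (T δ ηb : ℝ) (c w α : ℝ → ℝ) (t : ℝ) : ℝ :=
  - ∫ s in (0:ℝ)..t, hfun T δ ηb c w α s

def SuppM (α : ℝ → ℝ) : Set ℝ := {t | ∀ ε > 0, 0 < α (t + ε) - α (t - ε)}

def IsOpt (T δ ηb : ℝ) (c w α : ℝ → ℝ) : Prop :=
  MemM T ηb α ∧ ∀ β, MemM T ηb β → Phi T δ ηb c w α ≤ Phi T δ ηb c w β

lemma key_bdd (T δ ηb : ℝ) (α : ℝ → ℝ)
    (hT : 0 < T) (hδ : 0 < δ) (hη : 0 < ηb)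
    (hmono : Monotone α) (h0 : α 0 = 0) (hT' : α T = T * ηb) :
    ∀ t ∈ Set.Ico (0:ℝ) T, ∀ r ∈ Set.Icc (0:ℝ) T,
      Real.exp (-(α t) - δ * t) * Kker T δ ηb t r * Real.exp (α r + δ * r)
        ≤ (1 - Real.exp (-(ηb + δ) * T))⁻¹ := by
  have hE1 : 0 < Real.exp ((ηb + δ) * T) - 1 := by
    nlinarith [Real.add_one_le_exp ((ηb + δ) * T), mul_pos (by linarith : (0:ℝ) < ηb + δ) hT]
  have hDeq : 1 - Real.exp (-(ηb + δ) * T)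
      = (Real.exp ((ηb + δ) * T) - 1) / Real.exp ((ηb + δ) * T) := by
    rw [neg_mul, Real.exp_neg]
    field_simp
  have hD : 0 < 1 - Real.exp (-(ηb + δ) * T) := by
    rw [hDeq]; positivity
  intro t ht r hr
  unfold Kker
  by_cases h : r < t
  · rw [if_pos h]
    have hδr : δ * r ≤ δ * t := mul_le_mul_of_nonneg_left h.le hδ.le
    have h2 : Real.exp (-(α t) - δ * t) * Real.exp (α r + δ * r) ≤ 1 := by
      rw [← Real.exp_add, ← Real.exp_zero]
      exact Real.exp_le_exp.2 (by have := hmono h.le; linarith)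
    calc Real.exp (-(α t) - δ * t) * (1 - Real.exp (-(ηb + δ) * T))⁻¹ * Real.exp (α r + δ * r)
        = (Real.exp (-(α t) - δ * t) * Real.exp (α r + δ * r)) *
            (1 - Real.exp (-(ηb + δ) * T))⁻¹ := by ring
      _ ≤ (1 - Real.exp (-(ηb + δ) * T))⁻¹ := mul_le_of_le_one_left (inv_nonneg.2 hD.le) h2
  · rw [if_neg h]
    have hαr : α r ≤ T * ηb := hT' ▸ hmono hr.2
    have hαt : 0 ≤ α t := h0 ▸ hmono ht.1
    have hδr : δ * r ≤ δ * T := mul_le_mul_of_nonneg_left hr.2 hδ.le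
    have hδt : 0 ≤ δ * t := mul_nonneg hδ.le ht.1
    have h2 : Real.exp (-(α t) - δ * t) * Real.exp (α r + δ * r) ≤ Real.exp ((ηb + δ) * T) := by
      rw [← Real.exp_add]
      exact Real.exp_le_exp.2 (by nlinarith)
    have hEid : (1 - Real.exp (-(ηb + δ) * T))⁻¹
        = Real.exp ((ηb + δ) * T) * (Real.exp ((ηb + δ) * T) - 1)⁻¹ := by
      rw [hDeq, inv_div, div_eq_mul_inv]
    rw [hEid]
    calc Real.exp (-(α t) - δ * t) * (Real.exp ((ηb + δ) * T) - 1)⁻¹ * Real.exp (α r + δ * r)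
        = (Real.exp (-(α t) - δ * t) * Real.exp (α r + δ * r)) *
            (Real.exp ((ηb + δ) * T) - 1)⁻¹ := by ring
      _ ≤ Real.exp ((ηb + δ) * T) * (Real.exp ((ηb + δ) * T) - 1)⁻¹ :=
          mul_le_mul_of_nonneg_right h2 (inv_nonneg.2 hE1.le)

theorem stmt1 (T δ ηb : ℝ) (c α : ℝ → ℝ)
    (hT : 0 < T) (hδ : 0 < δ) (hη : 0 < ηb)
    (hc0 : ∀ t, 0 ≤ c t) (hcP : ∀ t, c (t + T) = c t)
    (hcI : IntegrableOn c (Set.Icc 0 T))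
    (hα : MemM T ηb α) :
    ∀ t ∈ Set.Ico (0:ℝ) T,
      0 ≤ Sfun T δ ηb c α t ∧
      Sfun T δ ηb c α t ≤ (∫ r in Set.Icc (0:ℝ) T, |c r|) / (1 - Real.exp (-(ηb + δ) * T)) := by
  obtain ⟨hmono, hrc, h0, hper, hT'⟩ := hα
  have key := key_bdd T δ ηb α hT hδ hη hmono h0 hT'
  have hE1 : 0 < Real.exp ((ηb + δ) * T) - 1 := by
    nlinarith [Real.add_one_le_exp ((ηb + δ) * T), mul_pos (by linarith : (0:ℝ) < ηb + δ) hT]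
  have hDeq : 1 - Real.exp (-(ηb + δ) * T)
      = (Real.exp ((ηb + δ) * T) - 1) / Real.exp ((ηb + δ) * T) := by
    rw [neg_mul, Real.exp_neg]
    field_simp
  have hD : 0 < 1 - Real.exp (-(ηb + δ) * T) := by
    rw [hDeq]; positivity
  have hK0 : ∀ t r, 0 ≤ Kker T δ ηb t r := by
    intro t r
    unfold Kker
    split
    · exact inv_nonneg.2 hD.le
    · exact inv_nonneg.2 hE1.le
  intro t ht
  constructor
  · simp only [Sfun]
    apply mul_nonneg (Real.exp_pos _).le
    apply intervalIntegral.integral_nonneg hT.le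
    intro r _
    exact mul_nonneg (mul_nonneg (hK0 t r) (hc0 r)) (Real.exp_pos _).le
  · have hmain : Sfun T δ ηb c α t
        = ∫ r in (0:ℝ)..T,
            (Real.exp (-(α t) - δ * t) * Kker T δ ηb t r * Real.exp (α r + δ * r)) * c r := by
      simp only [Sfun]
      rw [← intervalIntegral.integral_const_mul]
      apply intervalIntegral.integral_congr
      intro r _
      ring
    -- measurability
    have hαm : Measurable α := hmono.measurable
    have hKm : Measurable fun r => Kker T δ ηb t r := by
      unfold Kker
      exact Measurable.ite measurableSet_Iio measurable_const measurable_const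
    have hFm : Measurable fun r =>
        Real.exp (-(α t) - δ * t) * Kker T δ ηb t r * Real.exp (α r + δ * r) :=
      ((measurable_const.mul hKm).mul ((hαm.add (measurable_const.mul measurable_id)).exp))
    have hF0 : ∀ r, 0 ≤ Real.exp (-(α t) - δ * t) * Kker T δ ηb t r * Real.exp (α r + δ * r) :=
      fun r => mul_nonneg (mul_nonneg (Real.exp_pos _).le (hK0 t r)) (Real.exp_pos _).le
    have intLHS : IntervalIntegrable (fun r =>
        (Real.exp (-(α t) - δ * t) * Kker T δ ηb t r * Real.exp (α r + δ * r)) * c r)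
        volume 0 T := by
      rw [intervalIntegrable_iff_integrableOn_Ioc_of_le hT.le]
      apply Integrable.bdd_mul (c := (1 - Real.exp (-(ηb + δ) * T))⁻¹)
        (hcI.mono_set Ioc_subset_Icc_self) hFm.aestronglyMeasurable
      apply ae_restrict_of_forall_mem measurableSet_Ioc
      intro r hr
      rw [Real.norm_eq_abs, abs_of_nonneg (hF0 r)]
      exact key t ht r (Ioc_subset_Icc_self hr)
    have intRHS : IntervalIntegrable
        (fun r => (1 - Real.exp (-(ηb + δ) * T))⁻¹ * |c r|) volume 0 T := by
      apply IntegrableOn.intervalIntegrable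
      rw [uIcc_of_le hT.le]
      exact hcI.abs.const_mul _
    rw [hmain]
    calc (∫ r in (0:ℝ)..T,
            (Real.exp (-(α t) - δ * t) * Kker T δ ηb t r * Real.exp (α r + δ * r)) * c r)
        ≤ ∫ r in (0:ℝ)..T, (1 - Real.exp (-(ηb + δ) * T))⁻¹ * |c r| := by
          apply intervalIntegral.integral_mono_on hT.le intLHS intRHS
          intro r hr
          calc (Real.exp (-(α t) - δ * t) * Kker T δ ηb t r * Real.exp (α r + δ * r)) * c r
              ≤ (1 - Real.exp (-(ηb + δ) * T))⁻¹ * c r :=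
                mul_le_mul_of_nonneg_right (key t ht r hr) (hc0 r)
            _ ≤ (1 - Real.exp (-(ηb + δ) * T))⁻¹ * |c r| :=
                mul_le_mul_of_nonneg_left (le_abs_self _) (inv_nonneg.2 hD.le)
      _ = (1 - Real.exp (-(ηb + δ) * T))⁻¹ * ∫ r in (0:ℝ)..T, |c r| :=
          intervalIntegral.integral_const_mul _ _
      _ = (∫ r in Set.Icc (0:ℝ) T, |c r|) / (1 - Real.exp (-(ηb + δ) * T)) := by
          rw [intervalIntegral.integral_of_le hT.le, ← integral_Icc_eq_integral_Ioc,
            div_eq_inv_mul]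
end

section
/- Let α, α̃ ∈ M(T, η̄) with α ≠ α̃, and define φ(ε) = Φ[(1-ε)α + εα̃] for ε ∈ [0,1], where Φ[β] = ∫₀ᵀ w(t) e^{-β(t)-δt} ∫₀ᵀ K(t,r) c(r) e^{β(r)+δr} dr dt. If either c > 0 a.e. or w > 0 a.e., then φ''(ε) > 0 for all ε ∈ [0,1]; consequently Φ[(1-ε)α + εα̃] < (1-ε)Φ[α] + εΦ[α̃] for ε ∈ (0,1). -/
open MeasureTheory intervalIntegral Real Set Filter Topology

/-! ### Auxiliary definitions for the convexity argument -/

noncomputable abbrev FF (T δ ηb : ℝ) (c w : ℝ → ℝ) (p : ℝ × ℝ) : ℝ :=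
  w p.1 * Kker T δ ηb p.1 p.2 * c p.2

abbrev AA (δ : ℝ) (α : ℝ → ℝ) (p : ℝ × ℝ) : ℝ := α p.2 - α p.1 + δ * (p.2 - p.1)

abbrev GG (α β : ℝ → ℝ) (p : ℝ × ℝ) : ℝ := (β p.2 - α p.2) - (β p.1 - α p.1)

noncomputable abbrev Mnu (T : ℝ) : Measure (ℝ × ℝ) :=
  (volume.restrict (Set.Ioc 0 T)).prod (volume.restrict (Set.Ioc 0 T))

/-- From non-a.e.-vanishing on `Icc 0 T`, positive measure of the non-vanishing set in
`Ioc 0 T`. -/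
lemma aux_measpos (T : ℝ) (u : ℝ → ℝ)
    (hu : ¬ u =ᵐ[volume.restrict (Set.Icc (0:ℝ) T)] 0) :
    0 < volume.restrict (Set.Ioc (0:ℝ) T) ({t | u t ≠ 0} ∩ Set.Ioc 0 T) := by
  have h1 : volume.restrict (Set.Icc (0:ℝ) T) {t | u t ≠ 0} ≠ 0 := by
    intro h
    exact hu (ae_iff.2 (by simpa using h))
  rw [Measure.restrict_apply' measurableSet_Icc] at h1
  have h2 : volume ({t | u t ≠ 0} ∩ Set.Icc 0 T)
      ≤ volume ({t | u t ≠ 0} ∩ Set.Ioc 0 T) + volume ({(0:ℝ)}) := by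
    refine (measure_mono ?_).trans (measure_union_le _ _)
    rintro x ⟨hx1, hx2⟩
    rcases eq_or_ne x 0 with rfl | hx0
    · exact Or.inr rfl
    · exact Or.inl ⟨hx1, ⟨lt_of_le_of_ne hx2.1 (Ne.symm hx0), hx2.2⟩⟩
  rw [Real.volume_singleton, add_zero] at h2
  rw [Measure.restrict_apply' measurableSet_Ioc]
  have : ({t | u t ≠ 0} ∩ Set.Ioc 0 T) ∩ Set.Ioc 0 T = {t | u t ≠ 0} ∩ Set.Ioc 0 T := by
    rw [Set.inter_assoc, Set.inter_self]
  rw [this]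
  refine pos_iff_ne_zero.2 fun h => h1 ?_
  rw [h] at h2
  exact le_antisymm h2 zero_le

/-- If `α ≠ β` (both normalized, right continuous, periodic with the same increment), then
for every value `v` there is a positive-measure measurable subset of `Ioc 0 T` on which
`β - α` avoids `v`. -/
lemma aux_claim (T : ℝ) (hT : 0 < T) (α β : ℝ → ℝ)
    (hαrc : ∀ t, ContinuousWithinAt α (Set.Ici t) t) (hα0 : α 0 = 0)
    (hαper : ∀ t, α (t + T) = α t + α T)
    (hβrc : ∀ t, ContinuousWithinAt β (Set.Ici t) t) (hβ0 : β 0 = 0)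
    (hβper : ∀ t, β (t + T) = β t + β T) (hαβT : α T = β T) (hne : α ≠ β) :
    ∀ v : ℝ, ∃ W, MeasurableSet W ∧ W ⊆ Set.Ioc 0 T ∧
      0 < volume.restrict (Set.Ioc (0:ℝ) T) W ∧ ∀ x ∈ W, (β x - α x) ≠ v := by
  set g : ℝ → ℝ := fun t => β t - α t with hgdef
  have hg0 : g 0 = 0 := by simp [hgdef, hα0, hβ0]
  obtain ⟨t0, ht0⟩ : ∃ t0, g t0 ≠ 0 := by
    by_contra h
    push_neg at h
    exact hne (funext fun t => by have := h t; simp only [hgdef] at this; linarith)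
  have hper : Function.Periodic g T := by
    intro x
    simp only [hgdef]
    rw [hαper, hβper]
    have : α T = β T := hαβT
    ring_nf
    linarith
  obtain ⟨s, hs, hgs⟩ := hper.exists_mem_Ico₀ hT t0
  have hgs0 : g s ≠ 0 := hgs ▸ ht0
  have hsT : s ∈ Set.Ioo 0 T :=
    ⟨lt_of_le_of_ne hs.1 (fun h => hgs0 (h ▸ hg0)), hs.2⟩
  set d : ℝ := |g s| / 3 with hddef
  have hd : 0 < d := by
    have : 0 < |g s| := abs_pos.2 hgs0
    simp only [hddef]; linarith
  have rc : ∀ x0 : ℝ, ∃ h > 0, ∀ x, x0 ≤ x → x < x0 + h → |g x - g x0| < d := by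
    intro x0
    have hc : ContinuousWithinAt g (Set.Ici x0) x0 := (hβrc x0).sub (hαrc x0)
    have hmem := hc (Metric.ball_mem_nhds (g x0) hd)
    rw [Filter.mem_map, Metric.mem_nhdsWithin_iff] at hmem
    obtain ⟨ε', hε', hsub⟩ := hmem
    refine ⟨ε', hε', fun x h1 h2 => ?_⟩
    have hx : x ∈ Metric.ball x0 ε' ∩ Set.Ici x0 := by
      constructor
      · rw [Metric.mem_ball, Real.dist_eq, abs_of_nonneg (by linarith)]; linarith
      · exact h1
    have := hsub hx
    simpa [Real.dist_eq] using this
  obtain ⟨h1, hh1, hU⟩ := rc s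
  obtain ⟨h2, hh2, hV⟩ := rc 0
  set u1 : ℝ := min (s + h1) T with hu1def
  have hU' : ∀ x ∈ Set.Ico s u1, |g x - g s| < d := fun x hx =>
    hU x hx.1 (lt_of_lt_of_le hx.2 (min_le_left _ _))
  have hUsub : Set.Ico s u1 ⊆ Set.Ioc 0 T := fun x hx =>
    ⟨lt_of_lt_of_le hsT.1 hx.1, le_of_lt (lt_of_lt_of_le hx.2 (min_le_right _ _))⟩
  have hUμ : 0 < volume.restrict (Set.Ioc (0:ℝ) T) (Set.Ico s u1) := by
    rw [Measure.restrict_apply measurableSet_Ico,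
      Set.inter_eq_self_of_subset_left hUsub, Real.volume_Ico]
    exact ENNReal.ofReal_pos.2 (sub_pos.2 (lt_min (by linarith) hsT.2))
  set v2 : ℝ := min (h2 / 2) T with hv2def
  have hV' : ∀ x ∈ Set.Ioc (0:ℝ) v2, |g x| < d := by
    intro x hx
    have := hV x (le_of_lt hx.1) (by
      have : x ≤ h2 / 2 := le_trans hx.2 (min_le_left _ _)
      linarith)
    rwa [hg0, sub_zero] at this
  have hVsub : Set.Ioc (0:ℝ) v2 ⊆ Set.Ioc 0 T := fun x hx =>
    ⟨hx.1, le_trans hx.2 (min_le_right _ _)⟩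
  have hVμ : 0 < volume.restrict (Set.Ioc (0:ℝ) T) (Set.Ioc (0:ℝ) v2) := by
    rw [Measure.restrict_apply measurableSet_Ioc,
      Set.inter_eq_self_of_subset_left hVsub, Real.volume_Ioc]
    exact ENNReal.ofReal_pos.2 (by rw [sub_zero]; exact lt_min (by linarith) hT)
  intro v
  by_cases hv : ∀ x ∈ Set.Ico s u1, g x ≠ v
  · exact ⟨Set.Ico s u1, measurableSet_Ico, hUsub, hUμ, hv⟩
  · refine ⟨Set.Ioc 0 v2, measurableSet_Ioc, hVsub, hVμ, fun y hy hgy => ?_⟩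
    push_neg at hv
    obtain ⟨x, hxU, hgx⟩ := hv
    have e1 := hU' x hxU
    have e2 := hV' y hy
    have hxy : g x = g y := hgx.trans hgy.symm
    have habs : 0 < |g s| := abs_pos.2 hgs0
    obtain ⟨a11, a12⟩ := abs_lt.1 e1
    obtain ⟨a21, a22⟩ := abs_lt.1 e2
    have : |g s| < 2 * d := abs_lt.2 ⟨by linarith, by linarith⟩
    simp only [hddef] at this
    linarith

set_option maxHeartbeats 1000000 in
theorem stmt2 (T δ ηb : ℝ) (c w α β : ℝ → ℝ)
    (hT : 0 < T) (hδ : 0 < δ) (hη : 0 < ηb)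
    (hc0 : ∀ t, 0 ≤ c t) (hcP : ∀ t, c (t + T) = c t) (hcI : IntegrableOn c (Set.Icc 0 T))
    (hw0 : ∀ t, 0 ≤ w t) (hwP : ∀ t, w (t + T) = w t) (hwI : IntegrableOn w (Set.Icc 0 T))
    (hcne : ¬ c =ᵐ[volume.restrict (Set.Icc (0:ℝ) T)] 0)
    (hwne : ¬ w =ᵐ[volume.restrict (Set.Icc (0:ℝ) T)] 0)
    (hpos : (∀ᵐ t ∂volume, 0 < c t) ∨ (∀ᵐ t ∂volume, 0 < w t))
    (hα : MemM T ηb α) (hβ : MemM T ηb β) (hne : α ≠ β) :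
    (∀ ε ∈ Set.Icc (0:ℝ) 1,
      0 < deriv (deriv (fun e => Phi T δ ηb c w (fun t => (1 - e) * α t + e * β t))) ε) ∧
    (∀ ε ∈ Set.Ioo (0:ℝ) 1,
      Phi T δ ηb c w (fun t => (1 - ε) * α t + ε * β t) <
        (1 - ε) * Phi T δ ηb c w α + ε * Phi T δ ηb c w β) := by
  classical
  obtain ⟨hαmono, hαrc, hα0, hαper, hαT⟩ := hα
  obtain ⟨hβmono, hβrc, hβ0, hβper, hβT⟩ := hβ
  -- Constants
  set CK : ℝ := max (1 - Real.exp (-(ηb + δ) * T))⁻¹ (Real.exp ((ηb + δ) * T) - 1)⁻¹ with hCKdef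
  set CA : ℝ := T * ηb + δ * T with hCAdef
  set CG : ℝ := 2 * (T * ηb) with hCGdef
  have hCG0 : 0 ≤ CG := by rw [hCGdef]; positivity
  have hTδη : 0 < (ηb + δ) * T := by positivity
  have hKpos : ∀ t r, 0 < Kker T δ ηb t r := by
    intro t r
    unfold Kker
    split
    · refine inv_pos.2 ?_
      have : Real.exp (-(ηb + δ) * T) < 1 := by
        rw [Real.exp_lt_one_iff]; nlinarith
      linarith
    · refine inv_pos.2 ?_
      have : 1 < Real.exp ((ηb + δ) * T) := by
        rw [Real.one_lt_exp_iff]; nlinarith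
      linarith
  have hKle : ∀ t r, Kker T δ ηb t r ≤ CK := by
    intro t r
    rw [hCKdef]
    unfold Kker
    split
    exacts [le_max_left _ _, le_max_right _ _]
  have hCK0 : 0 ≤ CK := le_trans (hKpos 0 0).le (hKle 0 0)
  -- Measurability
  have hαmeas : Measurable α := hαmono.measurable
  have hβmeas : Measurable β := hβmono.measurable
  have hwInt : Integrable w (volume.restrict (Set.Ioc (0:ℝ) T)) :=
    hwI.mono_set Set.Ioc_subset_Icc_self
  have hcInt : Integrable c (volume.restrict (Set.Ioc (0:ℝ) T)) :=
    hcI.mono_set Set.Ioc_subset_Icc_self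
  have hwm := hwInt.aestronglyMeasurable
  have hcm := hcInt.aestronglyMeasurable
  have hwc : Integrable (fun p : ℝ × ℝ => w p.1 * c p.2) (Mnu T) := hwInt.mul_prod hcInt
  have hKm : Measurable (fun p : ℝ × ℝ => Kker T δ ηb p.1 p.2) := by
    unfold Kker
    exact Measurable.ite (measurableSet_lt measurable_snd measurable_fst)
      measurable_const measurable_const
  have hFm : AEStronglyMeasurable (FF T δ ηb c w) (Mnu T) :=
    (hwm.comp_fst.mul hKm.aestronglyMeasurable).mul hcm.comp_snd
  have hAm : Measurable (AA δ α) :=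
    ((hαmeas.comp measurable_snd).sub (hαmeas.comp measurable_fst)).add
      ((measurable_snd.sub measurable_fst).const_mul δ)
  have hGm : Measurable (GG α β) :=
    ((hβmeas.comp measurable_snd).sub (hαmeas.comp measurable_snd)).sub
      ((hβmeas.comp measurable_fst).sub (hαmeas.comp measurable_fst))
  have hEm : ∀ x : ℝ,
      AEStronglyMeasurable (fun p : ℝ × ℝ => Real.exp (AA δ α p + x * GG α β p)) (Mnu T) :=
    fun x => (Measurable.exp (hAm.add (hGm.const_mul x))).aestronglyMeasurable
  have hbox : ∀ᵐ p ∂(Mnu T), p.1 ∈ Set.Ioc (0:ℝ) T ∧ p.2 ∈ Set.Ioc (0:ℝ) T := by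
    have heq : Mnu T = (volume.prod volume).restrict
        ((Set.Ioc (0:ℝ) T) ×ˢ (Set.Ioc (0:ℝ) T)) := Measure.prod_restrict _ _
    rw [heq]
    filter_upwards [ae_restrict_mem (measurableSet_Ioc.prod measurableSet_Ioc)] with p hp
    exact ⟨hp.1, hp.2⟩
  -- Pointwise bounds
  have hF0 : ∀ p : ℝ × ℝ, 0 ≤ FF T δ ηb c w p := fun p =>
    mul_nonneg (mul_nonneg (hw0 _) (hKpos _ _).le) (hc0 _)
  have hFle : ∀ p : ℝ × ℝ, FF T δ ηb c w p ≤ CK * (w p.1 * c p.2) := by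
    intro p
    have h1 := hKle p.1 p.2
    have h2 := hw0 p.1
    have h3 := hc0 p.2
    calc FF T δ ηb c w p = Kker T δ ηb p.1 p.2 * (w p.1 * c p.2) := by simp only [FF]; ring
      _ ≤ CK * (w p.1 * c p.2) := mul_le_mul_of_nonneg_right h1 (mul_nonneg h2 h3)
  have hαbd : ∀ t ∈ Set.Ioc (0:ℝ) T, 0 ≤ α t ∧ α t ≤ T * ηb := fun t ht =>
    ⟨hα0 ▸ hαmono ht.1.le, hαT ▸ hαmono ht.2⟩
  have hβbd : ∀ t ∈ Set.Ioc (0:ℝ) T, 0 ≤ β t ∧ β t ≤ T * ηb := fun t ht =>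
    ⟨hβ0 ▸ hβmono ht.1.le, hβT ▸ hβmono ht.2⟩
  have hAbd : ∀ p : ℝ × ℝ, p.1 ∈ Set.Ioc (0:ℝ) T → p.2 ∈ Set.Ioc (0:ℝ) T → |AA δ α p| ≤ CA := by
    intro p h1 h2
    obtain ⟨a1, a2⟩ := hαbd p.1 h1
    obtain ⟨a3, a4⟩ := hαbd p.2 h2
    have hm1 : δ * (p.2 - p.1) ≤ δ * T :=
      mul_le_mul_of_nonneg_left (by linarith [h1.1, h2.2]) hδ.le
    have hm2 : δ * (-T) ≤ δ * (p.2 - p.1) :=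
      mul_le_mul_of_nonneg_left (by linarith [h2.1, h1.2]) hδ.le
    rw [hCAdef, abs_le]
    constructor <;> simp only [AA] <;> nlinarith
  have hGbd : ∀ p : ℝ × ℝ, p.1 ∈ Set.Ioc (0:ℝ) T → p.2 ∈ Set.Ioc (0:ℝ) T →
      |GG α β p| ≤ CG := by
    intro p h1 h2
    obtain ⟨a1, a2⟩ := hαbd p.1 h1
    obtain ⟨a3, a4⟩ := hαbd p.2 h2
    obtain ⟨b1, b2⟩ := hβbd p.1 h1
    obtain ⟨b3, b4⟩ := hβbd p.2 h2
    rw [hCGdef, abs_le]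
    constructor <;> simp only [GG] <;> nlinarith
  have hexpbd : ∀ (x : ℝ) (p : ℝ × ℝ), p.1 ∈ Set.Ioc (0:ℝ) T → p.2 ∈ Set.Ioc (0:ℝ) T →
      Real.exp (AA δ α p + x * GG α β p) ≤ Real.exp (CA + |x| * CG) := by
    intro x p h1 h2
    apply Real.exp_le_exp.2
    have hA := abs_le.1 (hAbd p h1 h2)
    have hx : x * GG α β p ≤ |x| * CG := by
      calc x * GG α β p ≤ |x * GG α β p| := le_abs_self _
        _ = |x| * |GG α β p| := abs_mul _ _
        _ ≤ |x| * CG := mul_le_mul_of_nonneg_left (hGbd p h1 h2) (abs_nonneg x)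
    linarith [hA.2]
  -- Master integrability lemma
  have master : ∀ (φ : ℝ × ℝ → ℝ) (Cb : ℝ), AEStronglyMeasurable φ (Mnu T) →
      (∀ p : ℝ × ℝ, p.1 ∈ Set.Ioc (0:ℝ) T → p.2 ∈ Set.Ioc (0:ℝ) T → |φ p| ≤ Cb) →
      Integrable (fun p => FF T δ ηb c w p * φ p) (Mnu T) := by
    intro φ Cb hm hb
    have hCb0 : 0 ≤ Cb :=
      le_trans (abs_nonneg _) (hb (T, T) ⟨hT, le_refl T⟩ ⟨hT, le_refl T⟩)
    refine Integrable.mono' (hwc.const_mul (CK * Cb)) (hFm.mul hm) ?_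
    filter_upwards [hbox] with p hp
    rw [Real.norm_eq_abs, abs_mul, abs_of_nonneg (hF0 p)]
    calc FF T δ ηb c w p * |φ p| ≤ FF T δ ηb c w p * Cb :=
          mul_le_mul_of_nonneg_left (hb p hp.1 hp.2) (hF0 p)
      _ ≤ (CK * (w p.1 * c p.2)) * Cb := mul_le_mul_of_nonneg_right (hFle p) hCb0
      _ = CK * Cb * (w p.1 * c p.2) := by ring
  -- Integrability of the three families
  have hf0I : ∀ x : ℝ, Integrable
      (fun p => FF T δ ηb c w p * Real.exp (AA δ α p + x * GG α β p)) (Mnu T) := by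
    intro x
    refine master _ (Real.exp (CA + |x| * CG)) (hEm x) fun p h1 h2 => ?_
    rw [abs_of_pos (Real.exp_pos _)]
    exact hexpbd x p h1 h2
  have hf1I : ∀ x : ℝ, Integrable
      (fun p => FF T δ ηb c w p *
        (Real.exp (AA δ α p + x * GG α β p) * GG α β p)) (Mnu T) := by
    intro x
    refine master _ (Real.exp (CA + |x| * CG) * CG)
      ((hEm x).mul hGm.aestronglyMeasurable) fun p h1 h2 => ?_
    rw [abs_mul, abs_of_pos (Real.exp_pos _)]
    exact mul_le_mul (hexpbd x p h1 h2) (hGbd p h1 h2) (abs_nonneg _) (Real.exp_pos _).le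
  have hf2I : ∀ x : ℝ, Integrable
      (fun p => FF T δ ηb c w p *
        (Real.exp (AA δ α p + x * GG α β p) * GG α β p * GG α β p)) (Mnu T) := by
    intro x
    refine master _ (Real.exp (CA + |x| * CG) * CG * CG)
      (((hEm x).mul hGm.aestronglyMeasurable).mul hGm.aestronglyMeasurable)
      fun p h1 h2 => ?_
    rw [abs_mul, abs_mul, abs_of_pos (Real.exp_pos _)]
    refine mul_le_mul ?_ (hGbd p h1 h2) (abs_nonneg _) ?_
    · exact mul_le_mul (hexpbd x p h1 h2) (hGbd p h1 h2) (abs_nonneg _) (Real.exp_pos _).le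
    · exact mul_nonneg (Real.exp_pos _).le hCG0
  -- Differentiation under the integral sign
  have hDer1 : ∀ e : ℝ, HasDerivAt
      (fun x : ℝ => ∫ p, FF T δ ηb c w p * Real.exp (AA δ α p + x * GG α β p) ∂(Mnu T))
      (∫ p, FF T δ ηb c w p *
        (Real.exp (AA δ α p + e * GG α β p) * GG α β p) ∂(Mnu T)) e := by
    intro e
    have hbnd : Integrable
        (fun p : ℝ × ℝ => Real.exp (CA + (|e| + 1) * CG) * CG * CK * (w p.1 * c p.2))
        (Mnu T) := hwc.const_mul _
    refine (hasDerivAt_integral_of_dominated_loc_of_deriv_le (s := Metric.ball e 1)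
      (F := fun x p => FF T δ ηb c w p * Real.exp (AA δ α p + x * GG α β p))
      (F' := fun x p => FF T δ ηb c w p *
        (Real.exp (AA δ α p + x * GG α β p) * GG α β p)) (Metric.ball_mem_nhds e one_pos)
      (Eventually.of_forall fun x => hFm.mul (hEm x)) (hf0I e)
      (hFm.mul ((hEm e).mul hGm.aestronglyMeasurable)) ?_ hbnd ?_).2
    · filter_upwards [hbox] with p hp x hx
      have hxb : |x| ≤ |e| + 1 := by
        have h' := mem_ball_iff_norm.1 hx
        rw [Real.norm_eq_abs] at h'
        have := abs_sub_abs_le_abs_sub x e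
        linarith
      have e1 : Real.exp (AA δ α p + x * GG α β p) ≤ Real.exp (CA + (|e| + 1) * CG) :=
        (hexpbd x p hp.1 hp.2).trans (Real.exp_le_exp.2 (by
          have := mul_le_mul_of_nonneg_right hxb hCG0
          linarith))
      simp only [Real.norm_eq_abs, abs_mul, abs_of_nonneg (hF0 p),
        abs_of_pos (Real.exp_pos _)]
      calc FF T δ ηb c w p * (Real.exp (AA δ α p + x * GG α β p) * |GG α β p|)
          ≤ (CK * (w p.1 * c p.2)) * (Real.exp (CA + (|e| + 1) * CG) * CG) := by
            refine mul_le_mul (hFle p) ?_ (by positivity) ?_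
            · exact mul_le_mul e1 (hGbd p hp.1 hp.2) (abs_nonneg _) (Real.exp_pos _).le
            · exact mul_nonneg hCK0 (mul_nonneg (hw0 _) (hc0 _))
        _ = Real.exp (CA + (|e| + 1) * CG) * CG * CK * (w p.1 * c p.2) := by ring
    · refine Eventually.of_forall fun p => fun x _ => ?_
      have hda : HasDerivAt (fun x : ℝ => AA δ α p + x * GG α β p) (GG α β p) x := by
        simpa using ((hasDerivAt_id x).mul_const (GG α β p)).const_add (AA δ α p)
      exact hda.exp.const_mul (FF T δ ηb c w p)
  have hDer2 : ∀ e : ℝ, HasDerivAt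
      (fun x : ℝ => ∫ p, FF T δ ηb c w p *
        (Real.exp (AA δ α p + x * GG α β p) * GG α β p) ∂(Mnu T))
      (∫ p, FF T δ ηb c w p *
        (Real.exp (AA δ α p + e * GG α β p) * GG α β p * GG α β p) ∂(Mnu T)) e := by
    intro e
    have hbnd : Integrable
        (fun p : ℝ × ℝ => Real.exp (CA + (|e| + 1) * CG) * CG * CG * CK * (w p.1 * c p.2))
        (Mnu T) := hwc.const_mul _
    refine (hasDerivAt_integral_of_dominated_loc_of_deriv_le (s := Metric.ball e 1)
      (F := fun x p => FF T δ ηb c w p *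
        (Real.exp (AA δ α p + x * GG α β p) * GG α β p))
      (F' := fun x p => FF T δ ηb c w p *
        (Real.exp (AA δ α p + x * GG α β p) * GG α β p * GG α β p)) (Metric.ball_mem_nhds e one_pos)
      (Eventually.of_forall fun x => hFm.mul ((hEm x).mul hGm.aestronglyMeasurable)) (hf1I e)
      (hFm.mul (((hEm e).mul hGm.aestronglyMeasurable).mul hGm.aestronglyMeasurable))
      ?_ hbnd ?_).2
    · filter_upwards [hbox] with p hp x hx
      have hxb : |x| ≤ |e| + 1 := by
        have h' := mem_ball_iff_norm.1 hx
        rw [Real.norm_eq_abs] at h'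
        have := abs_sub_abs_le_abs_sub x e
        linarith
      have e1 : Real.exp (AA δ α p + x * GG α β p) ≤ Real.exp (CA + (|e| + 1) * CG) :=
        (hexpbd x p hp.1 hp.2).trans (Real.exp_le_exp.2 (by
          have := mul_le_mul_of_nonneg_right hxb hCG0
          linarith))
      simp only [Real.norm_eq_abs, abs_mul, abs_of_nonneg (hF0 p),
        abs_of_pos (Real.exp_pos _)]
      calc FF T δ ηb c w p * (Real.exp (AA δ α p + x * GG α β p) * |GG α β p| * |GG α β p|)
          ≤ (CK * (w p.1 * c p.2)) * (Real.exp (CA + (|e| + 1) * CG) * CG * CG) := by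
            refine mul_le_mul (hFle p) ?_ (by positivity) ?_
            · refine mul_le_mul ?_ (hGbd p hp.1 hp.2) (abs_nonneg _) ?_
              · exact mul_le_mul e1 (hGbd p hp.1 hp.2) (abs_nonneg _) (Real.exp_pos _).le
              · exact mul_nonneg (Real.exp_pos _).le hCG0
            · exact mul_nonneg hCK0 (mul_nonneg (hw0 _) (hc0 _))
        _ = Real.exp (CA + (|e| + 1) * CG) * CG * CG * CK * (w p.1 * c p.2) := by ring
    · refine Eventually.of_forall fun p => fun x _ => ?_
      have hda : HasDerivAt (fun x : ℝ => AA δ α p + x * GG α β p) (GG α β p) x := by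
        simpa using ((hasDerivAt_id x).mul_const (GG α β p)).const_add (AA δ α p)
      exact (hda.exp.mul_const (GG α β p)).const_mul (FF T δ ηb c w p)
  -- Identification of `Phi` along the segment with the product integral
  have step1 : ∀ e : ℝ, Phi T δ ηb c w (fun t => (1 - e) * α t + e * β t)
      = ∫ p, FF T δ ηb c w p * Real.exp (AA δ α p + e * GG α β p) ∂(Mnu T) := by
    intro e
    have hswap0 : (∫ t in Set.Ioc (0:ℝ) T, ∫ r in Set.Ioc (0:ℝ) T,
        FF T δ ηb c w (t, r) * Real.exp (AA δ α (t, r) + e * GG α β (t, r)))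
        = ∫ p, FF T δ ηb c w p * Real.exp (AA δ α p + e * GG α β p) ∂(Mnu T) :=
      integral_integral (hf0I e)
    simp only [Phi, Sfun]
    simp only [intervalIntegral.integral_of_le hT.le]
    refine (MeasureTheory.integral_congr_ae (Eventually.of_forall fun t => ?_)).trans hswap0
    show w t * (Real.exp (-((1 - e) * α t + e * β t) - δ * t) *
        ∫ r in Set.Ioc (0:ℝ) T, Kker T δ ηb t r * c r *
          Real.exp ((1 - e) * α r + e * β r + δ * r))
      = ∫ r in Set.Ioc (0:ℝ) T,
          FF T δ ηb c w (t, r) * Real.exp (AA δ α (t, r) + e * GG α β (t, r))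
    rw [← MeasureTheory.integral_const_mul, ← MeasureTheory.integral_const_mul]
    refine MeasureTheory.integral_congr_ae (Eventually.of_forall fun r => ?_)
    have hE : Real.exp ((1 - e) * α r + e * β r + δ * r) *
        Real.exp (-((1 - e) * α t + e * β t) - δ * t)
        = Real.exp (AA δ α (t, r) + e * GG α β (t, r)) := by
      rw [← Real.exp_add]
      congr 1
      simp only [AA, GG]
      ring
    simp only [FF]
    rw [← hE]
    ring
  -- Pointwise positivity helpers
  have h9 : ∀ (e : ℝ) (q : ℝ × ℝ), 0 ≤ Real.exp (AA δ α q + e * GG α β q) * GG α β q * GG α β q :=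
    fun e q => by
      rw [mul_assoc]
      exact mul_nonneg (Real.exp_pos _).le (mul_self_nonneg _)
  have claim := aux_claim T hT α β hαrc hα0 hαper hβrc hβ0 hβper (by rw [hαT, hβT]) hne
  have inner_pos : ∀ (u ρ : ℝ → ℝ) (v : ℝ), (∀ x, 0 ≤ u x) →
      (∀ᵐ x ∂(volume : Measure ℝ), 0 < u x) →
      (∀ x, 0 ≤ ρ x) → (∀ x, β x - α x ≠ v → 0 < ρ x) →
      Integrable (fun x => u x * ρ x) (volume.restrict (Set.Ioc (0:ℝ) T)) →
      0 < ∫ x in Set.Ioc (0:ℝ) T, u x * ρ x := by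
    intro u ρ v hu0 huae hρ0 hρpos hI
    rw [integral_pos_iff_support_of_nonneg_ae
      (Eventually.of_forall fun x => mul_nonneg (hu0 x) (hρ0 x)) hI]
    obtain ⟨W, hWm, hWsub, hWμ, hWg⟩ := claim v
    have hZ : volume.restrict (Set.Ioc (0:ℝ) T) {x | ¬ 0 < u x} = 0 := by
      refine le_antisymm (le_trans (Measure.le_iff'.1 Measure.restrict_le_self _)
        (le_of_eq (ae_iff.1 huae))) zero_le
    have h1 := measure_le_inter_add_diff (volume.restrict (Set.Ioc (0:ℝ) T)) W {x | u x ≠ 0}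
    have h2 : volume.restrict (Set.Ioc (0:ℝ) T) (W \ {x | u x ≠ 0}) = 0 := by
      refine measure_mono_null (fun x hx => ?_) hZ
      have h := not_not.1 hx.2
      simp [h]
    rw [h2, add_zero] at h1
    calc (0:ENNReal) < volume.restrict (Set.Ioc (0:ℝ) T) W := hWμ
      _ ≤ volume.restrict (Set.Ioc (0:ℝ) T) (W ∩ {x | u x ≠ 0}) := h1
      _ ≤ volume.restrict (Set.Ioc (0:ℝ) T) (Function.support fun x => u x * ρ x) := by
          refine measure_mono fun x hx => ?_
          exact (mul_pos (lt_of_le_of_ne (hu0 x) (Ne.symm hx.2)) (hρpos x (hWg x hx.1))).ne'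
  have mk_int : ∀ (u ρ : ℝ → ℝ) (Cb : ℝ),
      Integrable u (volume.restrict (Set.Ioc (0:ℝ) T)) →
      AEStronglyMeasurable ρ (volume.restrict (Set.Ioc (0:ℝ) T)) →
      (∀ x ∈ Set.Ioc (0:ℝ) T, |ρ x| ≤ Cb) →
      Integrable (fun x => u x * ρ x) (volume.restrict (Set.Ioc (0:ℝ) T)) := by
    intro u ρ Cb hu hρm hb
    refine Integrable.mono' (hu.abs.const_mul Cb) (hu.aestronglyMeasurable.mul hρm) ?_
    filter_upwards [ae_restrict_mem measurableSet_Ioc] with x hx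
    rw [Real.norm_eq_abs, abs_mul]
    calc |u x| * |ρ x| ≤ |u x| * Cb := mul_le_mul_of_nonneg_left (hb x hx) (abs_nonneg _)
      _ = Cb * |u x| := mul_comm _ _
  -- Positivity of the second derivative integrand integral
  have pos2 : ∀ e : ℝ, 0 < ∫ p, FF T δ ηb c w p *
      (Real.exp (AA δ α p + e * GG α β p) * GG α β p * GG α β p) ∂(Mnu T) := by
    intro e
    have hswap : (∫ t in Set.Ioc (0:ℝ) T, ∫ r in Set.Ioc (0:ℝ) T,
        FF T δ ηb c w (t, r) *
          (Real.exp (AA δ α (t, r) + e * GG α β (t, r)) * GG α β (t, r) * GG α β (t, r)))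
        = ∫ p, FF T δ ηb c w p *
          (Real.exp (AA δ α p + e * GG α β p) * GG α β p * GG α β p) ∂(Mnu T) :=
      integral_integral (hf2I e)
    rcases hpos with hcpos | hwpos
    · -- case `c > 0` a.e.
      rw [← hswap]
      rw [integral_pos_iff_support_of_nonneg_ae
        (Eventually.of_forall fun t => integral_nonneg fun r =>
          mul_nonneg (hF0 (t, r)) (h9 e (t, r)))
        ((hf2I e).integral_prod_left)]
      refine lt_of_lt_of_le (aux_measpos T w hwne) (measure_mono ?_)
      rintro t ⟨htw, htIoc⟩
      show (∫ r in Set.Ioc (0:ℝ) T, FF T δ ηb c w (t, r) *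
        (Real.exp (AA δ α (t, r) + e * GG α β (t, r)) * GG α β (t, r) * GG α β (t, r))) ≠ 0
      set ρ : ℝ → ℝ := fun r => Kker T δ ηb t r *
        (Real.exp (AA δ α (t, r) + e * GG α β (t, r)) * GG α β (t, r) * GG α β (t, r))
        with hρdef
      have hrw : (∫ r in Set.Ioc (0:ℝ) T, FF T δ ηb c w (t, r) *
          (Real.exp (AA δ α (t, r) + e * GG α β (t, r)) * GG α β (t, r) * GG α β (t, r)))
          = w t * ∫ r in Set.Ioc (0:ℝ) T, c r * ρ r := by
        rw [← MeasureTheory.integral_const_mul]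
        refine MeasureTheory.integral_congr_ae (Eventually.of_forall fun r => ?_)
        simp only [hρdef, FF]
        ring
      rw [hrw]
      have hρ0 : ∀ r, 0 ≤ ρ r := fun r => by
        rw [hρdef]
        exact mul_nonneg (hKpos _ _).le (h9 e (t, r))
      have hρpos : ∀ r, β r - α r ≠ (β t - α t) → 0 < ρ r := by
        intro r hr
        rw [hρdef]
        refine mul_pos (hKpos _ _) ?_
        rw [mul_assoc]
        refine mul_pos (Real.exp_pos _) (mul_self_pos.2 ?_)
        simp only [GG]
        exact sub_ne_zero.2 hr
      have hρm : AEStronglyMeasurable ρ (volume.restrict (Set.Ioc (0:ℝ) T)) := by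
        have hc1 : Measurable (fun r : ℝ => (t, r)) := measurable_const.prodMk measurable_id
        exact ((hKm.comp hc1).mul
          ((((hAm.comp hc1).add ((hGm.comp hc1).const_mul e)).exp.mul
            (hGm.comp hc1)).mul (hGm.comp hc1))).aestronglyMeasurable
      have hρbd : ∀ r ∈ Set.Ioc (0:ℝ) T, |ρ r| ≤ CK * (Real.exp (CA + |e| * CG) * CG * CG) := by
        intro r hr
        rw [hρdef, abs_mul, abs_mul, abs_mul, abs_of_pos (hKpos _ _),
          abs_of_pos (Real.exp_pos _)]
        refine mul_le_mul (hKle _ _) ?_ (by positivity) hCK0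
        refine mul_le_mul ?_ (hGbd (t, r) htIoc hr) (abs_nonneg _) ?_
        · exact mul_le_mul (hexpbd e (t, r) htIoc hr) (hGbd (t, r) htIoc hr)
            (abs_nonneg _) (Real.exp_pos _).le
        · exact mul_nonneg (Real.exp_pos _).le hCG0
      have hInt := mk_int c ρ _ hcInt hρm hρbd
      have := inner_pos c ρ (β t - α t) hc0 hcpos hρ0 hρpos hInt
      exact (mul_pos (lt_of_le_of_ne (hw0 t) (Ne.symm htw)) this).ne'
    · -- case `w > 0` a.e.
      have hswap2 : (∫ r in Set.Ioc (0:ℝ) T, ∫ t in Set.Ioc (0:ℝ) T,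
          FF T δ ηb c w (t, r) *
            (Real.exp (AA δ α (t, r) + e * GG α β (t, r)) * GG α β (t, r) * GG α β (t, r)))
          = ∫ p, FF T δ ηb c w p *
            (Real.exp (AA δ α p + e * GG α β p) * GG α β p * GG α β p) ∂(Mnu T) :=
        (integral_integral_swap (hf2I e)).symm.trans hswap
      rw [← hswap2]
      rw [integral_pos_iff_support_of_nonneg_ae
        (Eventually.of_forall fun r => integral_nonneg fun t =>
          mul_nonneg (hF0 (t, r)) (h9 e (t, r)))
        ((hf2I e).integral_prod_right)]
      refine lt_of_lt_of_le (aux_measpos T c hcne) (measure_mono ?_)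
      rintro r ⟨hrc, hrIoc⟩
      show (∫ t in Set.Ioc (0:ℝ) T, FF T δ ηb c w (t, r) *
        (Real.exp (AA δ α (t, r) + e * GG α β (t, r)) * GG α β (t, r) * GG α β (t, r))) ≠ 0
      set ρ : ℝ → ℝ := fun t => Kker T δ ηb t r *
        (Real.exp (AA δ α (t, r) + e * GG α β (t, r)) * GG α β (t, r) * GG α β (t, r))
        with hρdef
      have hrw : (∫ t in Set.Ioc (0:ℝ) T, FF T δ ηb c w (t, r) *
          (Real.exp (AA δ α (t, r) + e * GG α β (t, r)) * GG α β (t, r) * GG α β (t, r)))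
          = c r * ∫ t in Set.Ioc (0:ℝ) T, w t * ρ t := by
        rw [← MeasureTheory.integral_const_mul]
        refine MeasureTheory.integral_congr_ae (Eventually.of_forall fun t => ?_)
        simp only [hρdef, FF]
        ring
      rw [hrw]
      have hρ0 : ∀ t, 0 ≤ ρ t := fun t => by
        rw [hρdef]
        exact mul_nonneg (hKpos _ _).le (h9 e (t, r))
      have hρpos : ∀ t, β t - α t ≠ (β r - α r) → 0 < ρ t := by
        intro t ht
        rw [hρdef]
        refine mul_pos (hKpos _ _) ?_
        rw [mul_assoc]
        refine mul_pos (Real.exp_pos _) (mul_self_pos.2 ?_)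
        simp only [GG]
        exact sub_ne_zero.2 (Ne.symm ht)
      have hρm : AEStronglyMeasurable ρ (volume.restrict (Set.Ioc (0:ℝ) T)) := by
        have hc1 : Measurable (fun t : ℝ => (t, r)) := measurable_id.prodMk measurable_const
        exact ((hKm.comp hc1).mul
          ((((hAm.comp hc1).add ((hGm.comp hc1).const_mul e)).exp.mul
            (hGm.comp hc1)).mul (hGm.comp hc1))).aestronglyMeasurable
      have hρbd : ∀ t ∈ Set.Ioc (0:ℝ) T, |ρ t| ≤ CK * (Real.exp (CA + |e| * CG) * CG * CG) := by
        intro t ht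
        rw [hρdef, abs_mul, abs_mul, abs_mul, abs_of_pos (hKpos _ _),
          abs_of_pos (Real.exp_pos _)]
        refine mul_le_mul (hKle _ _) ?_ (by positivity) hCK0
        refine mul_le_mul ?_ (hGbd (t, r) ht hrIoc) (abs_nonneg _) ?_
        · exact mul_le_mul (hexpbd e (t, r) ht hrIoc) (hGbd (t, r) ht hrIoc)
            (abs_nonneg _) (Real.exp_pos _).le
        · exact mul_nonneg (Real.exp_pos _).le hCG0
      have hInt := mk_int w ρ _ hwInt hρm hρbd
      have := inner_pos w ρ (β r - α r) hw0 hwpos hρ0 hρpos hInt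
      exact (mul_pos (lt_of_le_of_ne (hc0 r) (Ne.symm hrc)) this).ne'
  -- Assemble everything
  have hfun_eq : (fun e => Phi T δ ηb c w fun t => (1 - e) * α t + e * β t)
      = fun x : ℝ => ∫ p, FF T δ ηb c w p * Real.exp (AA δ α p + x * GG α β p) ∂(Mnu T) :=
    funext step1
  have hd1 : (deriv fun x : ℝ =>
      ∫ p, FF T δ ηb c w p * Real.exp (AA δ α p + x * GG α β p) ∂(Mnu T))
      = fun x : ℝ => ∫ p, FF T δ ηb c w p *
          (Real.exp (AA δ α p + x * GG α β p) * GG α β p) ∂(Mnu T) :=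
    funext fun x => (hDer1 x).deriv
  constructor
  · intro ε _
    rw [hfun_eq, hd1, (hDer2 ε).deriv]
    exact pos2 ε
  · intro ε hε
    have hcont : Continuous (fun x : ℝ =>
        ∫ p, FF T δ ηb c w p * Real.exp (AA δ α p + x * GG α β p) ∂(Mnu T)) :=
      continuous_iff_continuousAt.2 fun x => (hDer1 x).continuousAt
    have hconv : StrictConvexOn ℝ Set.univ (fun x : ℝ =>
        ∫ p, FF T δ ηb c w p * Real.exp (AA δ α p + x * GG α β p) ∂(Mnu T)) := by
      refine strictConvexOn_univ_of_deriv2_pos hcont fun x => ?_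
      have hit : deriv^[2] (fun x : ℝ =>
          ∫ p, FF T δ ηb c w p * Real.exp (AA δ α p + x * GG α β p) ∂(Mnu T))
          = deriv (deriv (fun x : ℝ =>
          ∫ p, FF T δ ηb c w p * Real.exp (AA δ α p + x * GG α β p) ∂(Mnu T))) := rfl
      rw [hit, hd1, (hDer2 x).deriv]
      exact pos2 x
    have key := hconv.2 (Set.mem_univ (0:ℝ)) (Set.mem_univ (1:ℝ)) (by norm_num)
      (show (0:ℝ) < 1 - ε by linarith [hε.2]) hε.1 (by ring)
    simp only [smul_eq_mul, mul_zero, mul_one, zero_add, add_zero] at key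
    rw [← step1 ε, ← step1 0, ← step1 1] at key
    have e0 : (fun t => (1 - (0:ℝ)) * α t + 0 * β t) = α := funext fun t => by ring
    have e1 : (fun t => (1 - (1:ℝ)) * α t + 1 * β t) = β := funext fun t => by ring
    rw [e0, e1] at key
    exact key
end

section
/- If a sequence {αₙ} ⊂ M(T, η̄) converges pointwise to a function α, then α ∈ M(T, η̄) and Φ[αₙ] → Φ[α]. -/
open MeasureTheory intervalIntegral Real Set Filter Topology

theorem stmt3 (T δ ηb : ℝ) (c w : ℝ → ℝ) (αn : ℕ → ℝ → ℝ) (α : ℝ → ℝ)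
    (hT : 0 < T) (hδ : 0 < δ) (hη : 0 < ηb)
    (hc0 : ∀ t, 0 ≤ c t) (hcP : ∀ t, c (t + T) = c t) (hcI : IntegrableOn c (Set.Icc 0 T))
    (hw0 : ∀ t, 0 ≤ w t) (hwP : ∀ t, w (t + T) = w t) (hwI : IntegrableOn w (Set.Icc 0 T))
    (hαn : ∀ n, MemM T ηb (αn n))
    (hlim : ∀ t, Tendsto (fun n => αn n t) atTop (𝓝 (α t))) :
    Monotone α ∧ α 0 = 0 ∧ (∀ t, α (t + T) = α t + α T) ∧ α T = T * ηb ∧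
      Tendsto (fun n => Phi T δ ηb c w (αn n)) atTop (𝓝 (Phi T δ ηb c w α)) := by

  -- Basic limit properties of α
  have hmono : Monotone α := fun a b hab =>
    le_of_tendsto_of_tendsto' (hlim a) (hlim b) fun n => (hαn n).1 hab
  have hα0 : α 0 = 0 := by
    have h0 : (fun n => αn n 0) = fun _ : ℕ => (0 : ℝ) := funext fun n => (hαn n).2.2.1
    exact tendsto_nhds_unique (hlim 0) (h0 ▸ tendsto_const_nhds)
  have hαT : α T = T * ηb := by
    have h0 : (fun n => αn n T) = fun _ : ℕ => T * ηb := funext fun n => (hαn n).2.2.2.2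
    exact tendsto_nhds_unique (hlim T) (h0 ▸ tendsto_const_nhds)
  have hαP : ∀ t, α (t + T) = α t + α T := by
    intro t
    exact tendsto_nhds_unique (hlim (t + T))
      (((hlim t).add (hlim T)).congr fun n => ((hαn n).2.2.2.1 t).symm)
  refine ⟨hmono, hα0, hαP, hαT, ?_⟩
  -- Constants
  set A : ℝ := (1 - Real.exp (-(ηb + δ) * T))⁻¹ with hA_def
  set B : ℝ := (Real.exp ((ηb + δ) * T) - 1)⁻¹ with hB_def
  have hMT : 0 < (ηb + δ) * T := mul_pos (by linarith) hT
  have hA : 0 < A := by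
    apply inv_pos.2
    have : Real.exp (-(ηb + δ) * T) < 1 := Real.exp_lt_one_iff.mpr (by nlinarith)
    linarith
  have hB : 0 < B := by
    apply inv_pos.2
    have : (1 : ℝ) < Real.exp ((ηb + δ) * T) := by
      calc (1:ℝ) = Real.exp 0 := Real.exp_zero.symm
      _ < Real.exp ((ηb + δ) * T) := Real.exp_lt_exp.mpr hMT
    linarith
  set C : ℝ := max A B with hC_def
  have hC : 0 < C := lt_of_lt_of_le hA (le_max_left _ _)
  have hK : ∀ t r : ℝ, |Kker T δ ηb t r| ≤ C := by
    intro t r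
    unfold Kker
    split
    · rw [abs_of_pos hA]; exact le_max_left _ _
    · rw [abs_of_pos hB]; exact le_max_right _ _
  set E : ℝ := Real.exp (T * ηb + δ * T) with hE_def
  have hE : 0 < E := Real.exp_pos _
  -- bounds for a monotone β with the right endpoint values
  have key : ∀ β : ℝ → ℝ, Monotone β → β 0 = 0 → β T = T * ηb →
      ∀ r ∈ Icc (0:ℝ) T, 0 ≤ β r ∧ β r ≤ T * ηb := by
    intro β hm h0 hTb r hr
    constructor
    · calc (0:ℝ) = β 0 := h0.symm
      _ ≤ β r := hm hr.1
    · calc β r ≤ β T := hm hr.2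
      _ = T * ηb := hTb
  have hexpBd : ∀ β : ℝ → ℝ, Monotone β → β 0 = 0 → β T = T * ηb →
      ∀ r ∈ Icc (0:ℝ) T, Real.exp (β r + δ * r) ≤ E := by
    intro β hm h0 hTb r hr
    apply Real.exp_le_exp.2
    have h1 := (key β hm h0 hTb r hr).2
    have h2 : δ * r ≤ δ * T := mul_le_mul_of_nonneg_left hr.2 hδ.le
    linarith
  have hexpBd1 : ∀ β : ℝ → ℝ, Monotone β → β 0 = 0 → β T = T * ηb →
      ∀ t ∈ Icc (0:ℝ) T, Real.exp (-(β t) - δ * t) ≤ 1 := by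
    intro β hm h0 hTb t ht
    apply Real.exp_le_one_iff.2
    have h1 := (key β hm h0 hTb t ht).1
    have h2 : 0 ≤ δ * t := mul_nonneg hδ.le ht.1
    linarith
  -- measurable versions of c and w
  have hcm : AEStronglyMeasurable c (volume.restrict (Ioc (0:ℝ) T)) :=
    (hcI.mono_set Ioc_subset_Icc_self).aestronglyMeasurable
  have hwm : AEStronglyMeasurable w (volume.restrict (Ioc (0:ℝ) T)) :=
    (hwI.mono_set Ioc_subset_Icc_self).aestronglyMeasurable
  set c' : ℝ → ℝ := hcm.mk c with hc'_def
  have hc'sm : StronglyMeasurable c' := hcm.stronglyMeasurable_mk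
  have hcc' : ∀ᵐ r ∂(volume.restrict (Ioc (0:ℝ) T)), c r = c' r := hcm.ae_eq_mk
  -- the uIoc is Ioc
  have hI : Set.uIoc (0:ℝ) T = Ioc (0:ℝ) T := uIoc_of_le hT.le
  -- measurability of Kker in r
  have hKmeas : ∀ t : ℝ, Measurable fun r => Kker T δ ηb t r := by
    intro t
    unfold Kker
    exact Measurable.ite measurableSet_Iio measurable_const measurable_const
  -- inner integrand measurability for β monotone
  have hFmeas : ∀ (β : ℝ → ℝ), Monotone β → ∀ t : ℝ,
      AEStronglyMeasurable (fun r => Kker T δ ηb t r * c r * Real.exp (β r + δ * r))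
        (volume.restrict (Ioc (0:ℝ) T)) := by
    intro β hm t
    exact (((hKmeas t).aestronglyMeasurable.mul hcm).mul
      (Real.measurable_exp.comp (hm.measurable.add (measurable_id.const_mul δ))).aestronglyMeasurable)
  -- bound on inner integrand
  have hFbd : ∀ (β : ℝ → ℝ), Monotone β → β 0 = 0 → β T = T * ηb → ∀ t : ℝ,
      ∀ r ∈ Ioc (0:ℝ) T, ‖Kker T δ ηb t r * c r * Real.exp (β r + δ * r)‖ ≤ C * E * c r := by
    intro β hm h0 hTb t r hr
    have hr' : r ∈ Icc (0:ℝ) T := ⟨hr.1.le, hr.2⟩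
    have h1 := hK t r
    have h2 := hexpBd β hm h0 hTb r hr'
    have habs : ‖Kker T δ ηb t r * c r * Real.exp (β r + δ * r)‖
        = |Kker T δ ηb t r| * (c r * Real.exp (β r + δ * r)) := by
      rw [Real.norm_eq_abs, abs_mul, abs_mul, abs_of_nonneg (hc0 r),
        abs_of_nonneg (Real.exp_pos _).le, mul_assoc]
    rw [habs]
    calc |Kker T δ ηb t r| * (c r * Real.exp (β r + δ * r))
        ≤ C * (c r * E) := by
          apply mul_le_mul h1 (mul_le_mul_of_nonneg_left h2 (hc0 r))
            (mul_nonneg (hc0 r) (Real.exp_pos _).le) hC.le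
      _ = C * E * c r := by ring
  have hcIoc : IntegrableOn c (Ioc (0:ℝ) T) := hcI.mono_set Ioc_subset_Icc_self
  have hwIoc : IntegrableOn w (Ioc (0:ℝ) T) := hwI.mono_set Ioc_subset_Icc_self
  have hboundInt : IntegrableOn (fun r => C * E * c r) (Ioc (0:ℝ) T) := by
    simpa [mul_assoc, IntegrableOn] using hcIoc.const_mul (C * E)
  -- inner convergence
  have hg_tendsto : ∀ t : ℝ, Tendsto
      (fun n => ∫ r in (0:ℝ)..T, Kker T δ ηb t r * c r * Real.exp (αn n r + δ * r)) atTop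
      (𝓝 (∫ r in (0:ℝ)..T, Kker T δ ηb t r * c r * Real.exp (α r + δ * r))) := by
    intro t
    apply intervalIntegral.tendsto_integral_filter_of_dominated_convergence
      (fun r => C * E * c r)
    · exact Eventually.of_forall fun n => by
        rw [hI]; exact hFmeas (αn n) (hαn n).1 t
    · apply Eventually.of_forall
      intro n
      apply ae_of_all
      intro r hr
      rw [hI] at hr
      exact hFbd (αn n) (hαn n).1 (hαn n).2.2.1 (hαn n).2.2.2.2 t r hr
    · rw [intervalIntegrable_iff, hI]; exact hboundInt
    · apply ae_of_all
      intro r _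
      exact Tendsto.const_mul (Kker T δ ηb t r * c r)
        ((Real.continuous_exp.tendsto _).comp ((hlim r).add_const (δ * r)))
  -- bound on the inner integral
  set CG : ℝ := C * E * ∫ r in Ioc (0:ℝ) T, c r with hCG_def
  have hCG : 0 ≤ CG := by
    apply mul_nonneg (mul_nonneg hC.le hE.le)
    exact setIntegral_nonneg measurableSet_Ioc fun r _ => hc0 r
  have hgbd : ∀ (β : ℝ → ℝ), Monotone β → β 0 = 0 → β T = T * ηb → ∀ t : ℝ,
      |∫ r in (0:ℝ)..T, Kker T δ ηb t r * c r * Real.exp (β r + δ * r)| ≤ CG := by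
    intro β hm h0 hTb t
    rw [intervalIntegral.integral_of_le hT.le]
    have h1 : ‖∫ r in Ioc (0:ℝ) T, Kker T δ ηb t r * c r * Real.exp (β r + δ * r)‖
        ≤ ∫ r in Ioc (0:ℝ) T, C * E * c r := by
      apply MeasureTheory.norm_integral_le_of_norm_le hboundInt
      filter_upwards [ae_restrict_mem measurableSet_Ioc] with r hr
      exact hFbd β hm h0 hTb t r hr
    rw [Real.norm_eq_abs] at h1
    calc |∫ r in Ioc (0:ℝ) T, Kker T δ ηb t r * c r * Real.exp (β r + δ * r)|
        ≤ ∫ r in Ioc (0:ℝ) T, C * E * c r := h1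
      _ = CG := by rw [hCG_def, MeasureTheory.integral_const_mul]
  -- replacing c by c' in the inner integral
  have hgc' : ∀ (β : ℝ → ℝ) (t : ℝ),
      (∫ r in (0:ℝ)..T, Kker T δ ηb t r * c r * Real.exp (β r + δ * r))
      = ∫ r in (0:ℝ)..T, Kker T δ ηb t r * c' r * Real.exp (β r + δ * r) := by
    intro β t
    rw [intervalIntegral.integral_of_le hT.le, intervalIntegral.integral_of_le hT.le]
    apply MeasureTheory.integral_congr_ae
    filter_upwards [hcc'] with r hr
    rw [hr]
  -- strong measurability of the inner integral (with c') as a function of t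
  have houterSM : ∀ β : ℝ → ℝ, Monotone β → StronglyMeasurable
      (fun t => ∫ r in (0:ℝ)..T, Kker T δ ηb t r * c' r * Real.exp (β r + δ * r)) := by
    intro β hm
    have hjoint : StronglyMeasurable
        (fun p : ℝ × ℝ => Kker T δ ηb p.1 p.2 * c' p.2 * Real.exp (β p.2 + δ * p.2)) := by
      apply Measurable.stronglyMeasurable
      apply Measurable.mul
      apply Measurable.mul
      · unfold Kker
        exact Measurable.ite (measurableSet_lt measurable_snd measurable_fst)
          measurable_const measurable_const
      · exact hc'sm.measurable.comp measurable_snd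
      · exact Real.measurable_exp.comp
          ((hm.measurable.comp measurable_snd).add (measurable_snd.const_mul δ))
    have h := hjoint.integral_prod_right' (ν := volume.restrict (Ioc (0:ℝ) T))
    have heq : (fun t => ∫ r in (0:ℝ)..T, Kker T δ ηb t r * c' r * Real.exp (β r + δ * r))
        = fun t => ∫ r, (fun p : ℝ × ℝ => Kker T δ ηb p.1 p.2 * c' p.2 *
            Real.exp (β p.2 + δ * p.2)) (t, r) ∂(volume.restrict (Ioc (0:ℝ) T)) := by
      funext t
      rw [intervalIntegral.integral_of_le hT.le]
    rw [heq]
    exact h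
  -- outer integrand measurability
  have houterAESM : ∀ β : ℝ → ℝ, Monotone β →
      AEStronglyMeasurable (fun t => w t * Sfun T δ ηb c β t)
        (volume.restrict (Ioc (0:ℝ) T)) := by
    intro β hm
    have heq : (fun t => w t * Sfun T δ ηb c β t)
        = fun t => w t * (Real.exp (-(β t) - δ * t) *
            ∫ r in (0:ℝ)..T, Kker T δ ηb t r * c' r * Real.exp (β r + δ * r)) := by
      funext t
      rw [Sfun, hgc']
    rw [heq]
    apply hwm.mul
    apply AEStronglyMeasurable.mul
    · exact (Real.measurable_exp.comp
        (hm.measurable.neg.sub (measurable_id.const_mul δ))).aestronglyMeasurable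
    · exact (houterSM β hm).aestronglyMeasurable
  -- outer bound
  have houterBd : ∀ (β : ℝ → ℝ), Monotone β → β 0 = 0 → β T = T * ηb →
      ∀ t ∈ Ioc (0:ℝ) T, ‖w t * Sfun T δ ηb c β t‖ ≤ CG * w t := by
    intro β hm h0 hTb t ht
    have ht' : t ∈ Icc (0:ℝ) T := ⟨ht.1.le, ht.2⟩
    have h1 := hexpBd1 β hm h0 hTb t ht'
    have h2 := hgbd β hm h0 hTb t
    rw [Real.norm_eq_abs, Sfun]
    calc |w t * (Real.exp (-(β t) - δ * t) *
          ∫ r in (0:ℝ)..T, Kker T δ ηb t r * c r * Real.exp (β r + δ * r))|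
        = w t * (Real.exp (-(β t) - δ * t) *
          |∫ r in (0:ℝ)..T, Kker T δ ηb t r * c r * Real.exp (β r + δ * r)|) := by
          rw [abs_mul, abs_mul, abs_of_nonneg (hw0 t), abs_of_nonneg (Real.exp_pos _).le]
      _ ≤ w t * (1 * CG) := by
          apply mul_le_mul_of_nonneg_left _ (hw0 t)
          exact mul_le_mul h1 h2 (abs_nonneg _) zero_le_one
      _ = CG * w t := by ring
  -- conclude with dominated convergence
  show Tendsto (fun n => ∫ t in (0:ℝ)..T, w t * Sfun T δ ηb c (αn n) t) atTop
    (𝓝 (∫ t in (0:ℝ)..T, w t * Sfun T δ ηb c α t))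
  apply intervalIntegral.tendsto_integral_filter_of_dominated_convergence
    (fun t => CG * w t)
  · exact Eventually.of_forall fun n => by rw [hI]; exact houterAESM (αn n) (hαn n).1
  · apply Eventually.of_forall
    intro n
    apply ae_of_all
    intro t ht
    rw [hI] at ht
    exact houterBd (αn n) (hαn n).1 (hαn n).2.2.1 (hαn n).2.2.2.2 t ht
  · rw [intervalIntegrable_iff, hI]
    simpa [mul_assoc, IntegrableOn] using hwIoc.const_mul CG
  · apply ae_of_all
    intro t _
    apply Tendsto.const_mul (w t)
    show Tendsto (fun n => Sfun T δ ηb c (αn n) t) atTop (𝓝 (Sfun T δ ηb c α t))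
    unfold Sfun
    exact Tendsto.mul
      ((Real.continuous_exp.tendsto _).comp (((hlim t).neg).sub_const (δ * t)))
      (hg_tendsto t)
end

section
/- Under the assumptions that c, w ∈ L¹₊ are T-periodic, neither identically zero, and at least one of them positive a.e., there exists a unique minimizer α_opt ∈ M(T, η̄) of the functional Φ over M(T, η̄). -/
open MeasureTheory intervalIntegral Real Set Filter Topology

noncomputable def Gfun (T δ ηb : ℝ) (c w : ℝ → ℝ) (t r : ℝ) : ℝ :=
  w t * c r * Kker T δ ηb t r * Real.exp (δ * (r - t))

noncomputable def Qm (T : ℝ) : Measure (ℝ × ℝ) :=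
  (volume.restrict (Ioc 0 T)).prod (volume.restrict (Ioc (0:ℝ) T))

section basic
variable {T δ ηb : ℝ} {c w α β : ℝ → ℝ}

lemma memM_linear (hη : 0 ≤ ηb) : MemM T ηb (fun t => ηb * t) := by
  refine ⟨fun a b h => by simpa using mul_le_mul_of_nonneg_left h hη,
    fun t => (continuous_const.mul continuous_id).continuousWithinAt, by simp, fun t => by ring,
    by ring⟩

lemma MemM.int_key (hα : MemM T ηb α) (m : ℤ) (t : ℝ) :
    α (t + m * T) = α t + m * (T * ηb) := by
  obtain ⟨-, -, -, hper, hT⟩ := hα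
  have key : ∀ s, α (s + T) = α s + T * ηb := fun s => by rw [hper s, hT]
  induction m using Int.induction_on with
  | zero => simp
  | succ n ih =>
      have e1 : t + ((n : ℤ) + 1 : ℤ) * T = (t + (n : ℤ) * T) + T := by push_cast; ring
      rw [e1, key]
      push_cast at ih ⊢
      linarith
  | pred n ih =>
      have h2 : t + (-(n : ℤ) - 1 : ℤ) * T + T = t + (-(n : ℤ) : ℤ) * T := by push_cast; ring
      have h3 := key (t + (-(n : ℤ) - 1 : ℤ) * T)
      rw [h2] at h3
      push_cast at ih h3 ⊢
      linarith

lemma MemM.bdd_Icc (hα : MemM T ηb α) {t : ℝ} (ht : t ∈ Icc 0 T) :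
    α t ∈ Icc 0 (T * ηb) := by
  obtain ⟨hm, -, h0, -, hT⟩ := hα
  exact ⟨h0 ▸ hm ht.1, hT ▸ hm ht.2⟩

lemma MemM.abs_le (hα : MemM T ηb α) (hT : 0 < T) (hη : 0 < ηb) (t : ℝ) :
    |α t| ≤ ηb * (|t| + T) := by
  have h := hα.int_key ⌊t / T⌋ (t - ⌊t / T⌋ * T)
  rw [sub_add_cancel] at h
  have h3 : (⌊t / T⌋ : ℝ) * T ≤ t := by
    have h := mul_le_mul_of_nonneg_right (Int.floor_le (t / T)) hT.le
    rwa [div_mul_cancel₀ _ hT.ne'] at h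
  have h4 : t < (⌊t / T⌋ : ℝ) * T + T := by
    have h := mul_lt_mul_of_pos_right (Int.lt_floor_add_one (t / T)) hT
    rw [div_mul_cancel₀ _ hT.ne'] at h
    linarith
  have h1 : t - ⌊t / T⌋ * T ∈ Icc 0 T := ⟨by linarith, by linarith⟩
  have h2 := hα.bdd_Icc h1
  have habs1 : -(|t|) ≤ t := neg_abs_le t
  have habs2 : t ≤ |t| := le_abs_self t
  have e1 : (t - T) * ηb ≤ ((⌊t / T⌋ : ℝ) * T) * ηb :=
    mul_le_mul_of_nonneg_right (by linarith) hη.le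
  have e2 : ((⌊t / T⌋ : ℝ) * T) * ηb ≤ t * ηb := mul_le_mul_of_nonneg_right h3 hη.le
  have e3 : (-(|t| + T)) * ηb ≤ (t - T) * ηb := mul_le_mul_of_nonneg_right (by linarith) hη.le
  have e4 : t * ηb ≤ |t| * ηb := mul_le_mul_of_nonneg_right habs2 hη.le
  rw [_root_.abs_le]
  constructor
  · nlinarith [h2.1]
  · nlinarith [h2.2]

lemma Kker_pos (hT : 0 < T) (hδ : 0 < δ) (hη : 0 < ηb) (t r : ℝ) :
    0 < Kker T δ ηb t r := by
  have h1 : (0:ℝ) < (ηb + δ) * T := by positivity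
  unfold Kker
  split
  · have : Real.exp (-(ηb + δ) * T) < 1 := by
      rw [Real.exp_lt_one_iff]; linarith
    have : 0 < 1 - Real.exp (-(ηb + δ) * T) := by linarith
    positivity
  · have : 1 < Real.exp ((ηb + δ) * T) := by
      rw [Real.one_lt_exp_iff]; positivity
    have : 0 < Real.exp ((ηb + δ) * T) - 1 := by linarith
    positivity

lemma Kker_le (hT : 0 < T) (hδ : 0 < δ) (hη : 0 < ηb) (t r : ℝ) :
    Kker T δ ηb t r ≤ max ((1 - Real.exp (-(ηb + δ) * T))⁻¹) ((Real.exp ((ηb + δ) * T) - 1)⁻¹) := by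
  unfold Kker; split
  · exact le_max_left _ _
  · exact le_max_right _ _

lemma Kker_measurable : Measurable (fun p : ℝ × ℝ => Kker T δ ηb p.1 p.2) := by
  unfold Kker
  exact Measurable.ite (measurableSet_lt measurable_snd measurable_fst)
    measurable_const measurable_const

lemma Phi_iterated (hT : 0 ≤ T) :
    Phi T δ ηb c w α
      = ∫ t in Ioc 0 T, ∫ r in Ioc 0 T, Gfun T δ ηb c w t r * Real.exp (α r - α t) := by
  unfold Phi Sfun
  rw [intervalIntegral.integral_of_le hT]
  refine integral_congr_ae (ae_of_all _ fun t => ?_)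
  dsimp only
  rw [intervalIntegral.integral_of_le hT, ← mul_assoc, ← MeasureTheory.integral_const_mul]
  refine integral_congr_ae (ae_of_all _ fun r => ?_)
  dsimp only
  unfold Gfun
  have he : Real.exp (-(α t) - δ * t) * Real.exp (α r + δ * r)
      = Real.exp (δ * (r - t)) * Real.exp (α r - α t) := by
    rw [← Real.exp_add, ← Real.exp_add]; ring_nf
  calc w t * Real.exp (-(α t) - δ * t) * (Kker T δ ηb t r * c r * Real.exp (α r + δ * r))
      = (w t * c r * Kker T δ ηb t r) *
        (Real.exp (-(α t) - δ * t) * Real.exp (α r + δ * r)) := by ring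
    _ = _ := by rw [he]; ring

lemma integrable_wc (hcI : IntegrableOn c (Set.Icc 0 T)) (hwI : IntegrableOn w (Set.Icc 0 T)) :
    Integrable (fun p : ℝ × ℝ => w p.1 * c p.2) (Qm T) :=
  Integrable.mul_prod (hwI.mono_set Ioc_subset_Icc_self)
    (hcI.mono_set Ioc_subset_Icc_self)

lemma ae_mem_square : ∀ᵐ p ∂(Qm T), p.1 ∈ Ioc (0:ℝ) T ∧ p.2 ∈ Ioc (0:ℝ) T := by
  unfold Qm
  rw [Measure.prod_restrict]
  filter_upwards [ae_restrict_mem ((measurableSet_Ioc).prod measurableSet_Ioc)] with p hp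
  exact hp

lemma core_aesm (hcI : IntegrableOn c (Set.Icc 0 T)) (hwI : IntegrableOn w (Set.Icc 0 T))
    {α : ℝ → ℝ} (hmono : Monotone α) :
    AEStronglyMeasurable
      (fun p : ℝ × ℝ => Gfun T δ ηb c w p.1 p.2 * Real.exp (α p.2 - α p.1)) (Qm T) := by
  have hwc := integrable_wc (T := T) (c := c) (w := w) hcI hwI
  have hmble : Measurable fun p : ℝ × ℝ =>
      Kker T δ ηb p.1 p.2 * Real.exp (δ * (p.2 - p.1)) * Real.exp (α p.2 - α p.1) := by
    have hα := hmono.measurable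
    exact ((Kker_measurable.mul (((measurable_const.mul
      ((measurable_snd.sub measurable_fst)))).exp)).mul
      (((hα.comp measurable_snd).sub (hα.comp measurable_fst)).exp))
  have heq : (fun p : ℝ × ℝ => Gfun T δ ηb c w p.1 p.2 * Real.exp (α p.2 - α p.1))
      = fun p => (w p.1 * c p.2) *
        (Kker T δ ηb p.1 p.2 * Real.exp (δ * (p.2 - p.1)) * Real.exp (α p.2 - α p.1)) := by
    funext p; unfold Gfun; ring
  rw [heq]
  exact hwc.aestronglyMeasurable.mul hmble.aestronglyMeasurable

lemma core_bound (hT : 0 < T) (hδ : 0 < δ) (hη : 0 < ηb)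
    (hc0 : ∀ t, 0 ≤ c t) (hw0 : ∀ t, 0 ≤ w t)
    {α : ℝ → ℝ} (hbd : ∀ t ∈ Icc 0 T, α t ∈ Icc 0 (T * ηb)) :
    ∀ᵐ p ∂(Qm T), ‖Gfun T δ ηb c w p.1 p.2 * Real.exp (α p.2 - α p.1)‖
      ≤ (max ((1 - Real.exp (-(ηb + δ) * T))⁻¹) ((Real.exp ((ηb + δ) * T) - 1)⁻¹)
          * Real.exp (δ * T) * Real.exp (T * ηb)) * (w p.1 * c p.2) := by
  set Kbd := max ((1 - Real.exp (-(ηb + δ) * T))⁻¹) ((Real.exp ((ηb + δ) * T) - 1)⁻¹) with hKbd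
  have hKbd0 : 0 < Kbd := lt_of_lt_of_le (Kker_pos hT hδ hη 0 0) (Kker_le hT hδ hη 0 0)
  filter_upwards [ae_mem_square] with p hp
  obtain ⟨h1, h2⟩ := hp
  have hb1 := hbd p.1 (Ioc_subset_Icc_self h1)
  have hb2 := hbd p.2 (Ioc_subset_Icc_self h2)
  have e1 : Real.exp (δ * (p.2 - p.1)) ≤ Real.exp (δ * T) := by
    apply Real.exp_le_exp.2
    have : p.2 - p.1 ≤ T := by cases h1; cases h2; linarith
    nlinarith
  have e2 : Real.exp (α p.2 - α p.1) ≤ Real.exp (T * ηb) := by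
    apply Real.exp_le_exp.2
    cases hb1; cases hb2; linarith
  have hK := Kker_le hT hδ hη p.1 p.2
  have hKp := (Kker_pos hT hδ hη p.1 p.2)
  have hwcp : 0 ≤ w p.1 * c p.2 := mul_nonneg (hw0 _) (hc0 _)
  rw [Real.norm_eq_abs, abs_of_nonneg]
  · unfold Gfun
    calc w p.1 * c p.2 * Kker T δ ηb p.1 p.2 * Real.exp (δ * (p.2 - p.1)) *
          Real.exp (α p.2 - α p.1)
        ≤ w p.1 * c p.2 * Kbd * Real.exp (δ * T) * Real.exp (T * ηb) := by
          have s1 : w p.1 * c p.2 * Kker T δ ηb p.1 p.2 ≤ w p.1 * c p.2 * Kbd :=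
            mul_le_mul_of_nonneg_left hK hwcp
          have s2 : w p.1 * c p.2 * Kker T δ ηb p.1 p.2 * Real.exp (δ * (p.2 - p.1))
              ≤ w p.1 * c p.2 * Kbd * Real.exp (δ * T) :=
            mul_le_mul s1 e1 (Real.exp_pos _).le (by positivity)
          exact mul_le_mul s2 e2 (Real.exp_pos _).le (by positivity)
      _ = Kbd * Real.exp (δ * T) * Real.exp (T * ηb) * (w p.1 * c p.2) := by ring
  · unfold Gfun
    have := (Real.exp_pos (δ * (p.2 - p.1))).le
    have := (Real.exp_pos (α p.2 - α p.1)).le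
    have := hKp.le
    positivity

lemma integrable_core (hT : 0 < T) (hδ : 0 < δ) (hη : 0 < ηb)
    (hc0 : ∀ t, 0 ≤ c t) (hw0 : ∀ t, 0 ≤ w t)
    (hcI : IntegrableOn c (Set.Icc 0 T)) (hwI : IntegrableOn w (Set.Icc 0 T))
    {α : ℝ → ℝ} (hmono : Monotone α) (hbd : ∀ t ∈ Icc 0 T, α t ∈ Icc 0 (T * ηb)) :
    Integrable (fun p : ℝ × ℝ => Gfun T δ ηb c w p.1 p.2 * Real.exp (α p.2 - α p.1)) (Qm T) := by
  set Kbd := max ((1 - Real.exp (-(ηb + δ) * T))⁻¹) ((Real.exp ((ηb + δ) * T) - 1)⁻¹) with hKbd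
  have hKbd0 : 0 < Kbd := lt_of_lt_of_le (Kker_pos hT hδ hη 0 0) (Kker_le hT hδ hη 0 0)
  set C := Kbd * Real.exp (δ * T) * Real.exp (T * ηb) with hC
  have hwc := integrable_wc (T := T) (c := c) (w := w) hcI hwI
  have hbound : Integrable (fun p : ℝ × ℝ => C * (w p.1 * c p.2)) (Qm T) := hwc.const_mul C
  refine hbound.mono' ?_ ?_
  · have hmble : Measurable fun p : ℝ × ℝ =>
        Kker T δ ηb p.1 p.2 * Real.exp (δ * (p.2 - p.1)) * Real.exp (α p.2 - α p.1) := by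
      have hα := hmono.measurable
      exact ((Kker_measurable.mul (((measurable_const.mul
        ((measurable_snd.sub measurable_fst)))).exp)).mul
        (((hα.comp measurable_snd).sub (hα.comp measurable_fst)).exp))
    have : (fun p : ℝ × ℝ => Gfun T δ ηb c w p.1 p.2 * Real.exp (α p.2 - α p.1))
        = fun p => (w p.1 * c p.2) *
          (Kker T δ ηb p.1 p.2 * Real.exp (δ * (p.2 - p.1)) * Real.exp (α p.2 - α p.1)) := by
      funext p; unfold Gfun; ring
    rw [this]
    exact hwc.aestronglyMeasurable.mul hmble.aestronglyMeasurable
  · filter_upwards [ae_mem_square] with p hp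
    obtain ⟨h1, h2⟩ := hp
    have hb1 := hbd p.1 (Ioc_subset_Icc_self h1)
    have hb2 := hbd p.2 (Ioc_subset_Icc_self h2)
    have e1 : Real.exp (δ * (p.2 - p.1)) ≤ Real.exp (δ * T) := by
      apply Real.exp_le_exp.2
      have : p.2 - p.1 ≤ T := by cases h1; cases h2; linarith
      nlinarith
    have e2 : Real.exp (α p.2 - α p.1) ≤ Real.exp (T * ηb) := by
      apply Real.exp_le_exp.2
      cases hb1; cases hb2; linarith
    have hK := Kker_le hT hδ hη p.1 p.2
    have hKp := (Kker_pos hT hδ hη p.1 p.2)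
    rw [Real.norm_eq_abs, abs_of_nonneg]
    · have hwcp : 0 ≤ w p.1 * c p.2 := mul_nonneg (hw0 _) (hc0 _)
      unfold Gfun
      calc w p.1 * c p.2 * Kker T δ ηb p.1 p.2 * Real.exp (δ * (p.2 - p.1)) *
            Real.exp (α p.2 - α p.1)
          ≤ w p.1 * c p.2 * Kbd * Real.exp (δ * T) * Real.exp (T * ηb) := by
            have s1 : w p.1 * c p.2 * Kker T δ ηb p.1 p.2 ≤ w p.1 * c p.2 * Kbd :=
              mul_le_mul_of_nonneg_left hK hwcp
            have s2 : w p.1 * c p.2 * Kker T δ ηb p.1 p.2 * Real.exp (δ * (p.2 - p.1))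
                ≤ w p.1 * c p.2 * Kbd * Real.exp (δ * T) :=
              mul_le_mul s1 e1 (Real.exp_pos _).le (by positivity)
            exact mul_le_mul s2 e2 (Real.exp_pos _).le (by positivity)
        _ = C * (w p.1 * c p.2) := by rw [hC]; ring
    · unfold Gfun
      have := (Real.exp_pos (δ * (p.2 - p.1))).le
      have := (Real.exp_pos (α p.2 - α p.1)).le
      have hwcp : 0 ≤ w p.1 * c p.2 := mul_nonneg (hw0 _) (hc0 _)
      positivity

lemma Phi_prod (hT : 0 < T) (hδ : 0 < δ) (hη : 0 < ηb)
    (hc0 : ∀ t, 0 ≤ c t) (hw0 : ∀ t, 0 ≤ w t)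
    (hcI : IntegrableOn c (Set.Icc 0 T)) (hwI : IntegrableOn w (Set.Icc 0 T))
    {α : ℝ → ℝ} (hmono : Monotone α) (hbd : ∀ t ∈ Icc 0 T, α t ∈ Icc 0 (T * ηb)) :
    Phi T δ ηb c w α
      = ∫ p, Gfun T δ ηb c w p.1 p.2 * Real.exp (α p.2 - α p.1) ∂(Qm T) := by
  rw [Phi_iterated hT.le]
  exact (MeasureTheory.integral_prod _
    (integrable_core hT hδ hη hc0 hw0 hcI hwI hmono hbd)).symm

end basic

section uniq
variable {T δ ηb : ℝ} {c w : ℝ → ℝ}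

lemma exp_midpoint_le (a b : ℝ) :
    Real.exp ((a + b) / 2) ≤ (Real.exp a + Real.exp b) / 2 := by
  have h1 : Real.exp a = Real.exp (a/2) * Real.exp (a/2) := by
    rw [← Real.exp_add]; ring_nf
  have h2 : Real.exp b = Real.exp (b/2) * Real.exp (b/2) := by
    rw [← Real.exp_add]; ring_nf
  have h3 : Real.exp ((a + b)/2) = Real.exp (a/2) * Real.exp (b/2) := by
    rw [← Real.exp_add]; ring_nf
  nlinarith [sq_nonneg (Real.exp (a/2) - Real.exp (b/2))]

lemma exp_midpoint_lt {a b : ℝ} (hab : a ≠ b) :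
    Real.exp ((a + b) / 2) < (Real.exp a + Real.exp b) / 2 := by
  have h1 : Real.exp a = Real.exp (a/2) * Real.exp (a/2) := by
    rw [← Real.exp_add]; ring_nf
  have h2 : Real.exp b = Real.exp (b/2) * Real.exp (b/2) := by
    rw [← Real.exp_add]; ring_nf
  have h3 : Real.exp ((a + b)/2) = Real.exp (a/2) * Real.exp (b/2) := by
    rw [← Real.exp_add]; ring_nf
  have hne : Real.exp (a/2) ≠ Real.exp (b/2) := by
    intro h; exact hab (by have := Real.exp_eq_exp.mp h; linarith)
  have h0 : Real.exp (a/2) - Real.exp (b/2) ≠ 0 := sub_ne_zero.mpr hne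
  have : 0 < (Real.exp (a/2) - Real.exp (b/2))^2 := by
    rcases h0.lt_or_gt with h | h <;> nlinarith
  nlinarith

/-- a right-continuous function a.e. equal to a constant on `Ioc 0 T` equals that constant
on `Ico 0 T`. -/
lemma rc_ae_const {Δ : ℝ → ℝ} {k T : ℝ} (hT : 0 < T)
    (hrc : ∀ t, ContinuousWithinAt Δ (Set.Ici t) t)
    (hae : ∀ᵐ t ∂(volume.restrict (Ioc 0 T)), Δ t = k) :
    ∀ t ∈ Ico 0 T, Δ t = k := by
  intro t ht
  have hnull : volume ({s | ¬ Δ s = k} ∩ Ioc 0 T) = 0 := by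
    have := ae_iff.mp hae
    rwa [Measure.restrict_apply₀' measurableSet_Ioc.nullMeasurableSet] at this
  set ε : ℕ → ℝ := fun n => min (T - t) (1 / (n + 1)) with hε
  have hεpos : ∀ n, 0 < ε n := fun n => lt_min (by linarith [ht.2]) (by positivity)
  have hx : ∀ n : ℕ, ∃ x, x ∈ Ioo t (t + ε n) ∧ Δ x = k := by
    intro n
    by_contra hcon
    push_neg at hcon
    have hsub : Ioo t (t + ε n) ⊆ {s | ¬ Δ s = k} ∩ Ioc 0 T := by
      intro x hx
      refine ⟨fun hk => hcon x hx hk, ?_, ?_⟩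
      · exact lt_of_le_of_lt ht.1 hx.1
      · have : ε n ≤ T - t := min_le_left _ _
        linarith [hx.2]
    have hle : volume (Ioo t (t + ε n)) ≤ volume ({s | ¬ Δ s = k} ∩ Ioc 0 T) :=
      measure_mono hsub
    rw [hnull] at hle
    have : volume (Ioo t (t + ε n)) = 0 := le_antisymm hle zero_le
    rw [Real.volume_Ioo] at this
    simp only [ENNReal.ofReal_eq_zero] at this
    linarith [hεpos n]
  choose x hx1 hx2 using hx
  have hxt : Tendsto x atTop (𝓝 t) := by
    have hub : ∀ n, x n ≤ t + 1 / (n + 1) := by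
      intro n
      have h5 : ε n ≤ 1 / (n + 1) := min_le_right _ _
      have := (hx1 n).2
      linarith
    have hlb : ∀ n, t ≤ x n := fun n => (hx1 n).1.le
    have h1 : Tendsto (fun n : ℕ => t + 1 / ((n : ℝ) + 1)) atTop (𝓝 t) := by
      have : Tendsto (fun n : ℕ => 1 / ((n:ℝ) + 1)) atTop (𝓝 0) := tendsto_one_div_add_atTop_nhds_zero_nat
      have h2 := this.const_add t
      simpa using h2
    exact tendsto_of_tendsto_of_tendsto_of_le_of_le tendsto_const_nhds h1 hlb hub
  have hxin : ∀ n, x n ∈ Ici t := fun n => (hx1 n).1.le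
  have hxtw : Tendsto x atTop (𝓝[Ici t] t) :=
    tendsto_nhdsWithin_of_tendsto_nhds_of_eventually_within _ hxt (Eventually.of_forall hxin)
  have hconv : Tendsto (fun n => Δ (x n)) atTop (𝓝 (Δ t)) := (hrc t).tendsto.comp hxtw
  have hconst : Tendsto (fun n => Δ (x n)) atTop (𝓝 k) := by
    simp only [hx2]; exact tendsto_const_nhds
  exact tendsto_nhds_unique hconv hconst

lemma memM_eq_of_ae_diff (hT : 0 < T) {α β : ℝ → ℝ} {k : ℝ}
    (hα : MemM T ηb α) (hβ : MemM T ηb β)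
    (h : ∀ᵐ t ∂(volume.restrict (Ioc 0 T)), α t - β t = k) : α = β := by
  set Δ : ℝ → ℝ := fun t => α t - β t with hΔ
  have hrc : ∀ t, ContinuousWithinAt Δ (Set.Ici t) t := fun t =>
    (hα.2.1 t).sub (hβ.2.1 t)
  have hico : ∀ t ∈ Ico 0 T, Δ t = k := rc_ae_const hT hrc h
  have hk0 : k = 0 := by
    have h0 := hico 0 ⟨le_refl 0, hT⟩
    rw [hΔ] at h0
    simp only [hα.2.2.1, hβ.2.2.1] at h0
    linarith
  have hper : Function.Periodic Δ T := by
    intro s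
    simp only [hΔ]
    rw [hα.2.2.2.1 s, hβ.2.2.2.1 s, hα.2.2.2.2, hβ.2.2.2.2]
    ring
  funext t
  have h3 : (⌊t / T⌋ : ℝ) * T ≤ t := by
    have h := mul_le_mul_of_nonneg_right (Int.floor_le (t / T)) hT.le
    rwa [div_mul_cancel₀ _ hT.ne'] at h
  have h4 : t < (⌊t / T⌋ : ℝ) * T + T := by
    have h := mul_lt_mul_of_pos_right (Int.lt_floor_add_one (t / T)) hT
    rw [div_mul_cancel₀ _ hT.ne'] at h
    linarith
  have hmem : t - (⌊t / T⌋ : ℝ) * T ∈ Ico 0 T := ⟨by linarith, by linarith⟩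
  have := hico _ hmem
  rw [hper.sub_int_mul_eq ⌊t / T⌋] at this
  rw [hk0] at this
  have : α t - β t = 0 := this
  linarith
end uniq

section uniq2
variable {T δ ηb : ℝ} {c w : ℝ → ℝ}

lemma memM_midpoint {α β : ℝ → ℝ} (hα : MemM T ηb α) (hβ : MemM T ηb β) :
    MemM T ηb (fun t => (α t + β t) / 2) := by
  refine ⟨fun a b h => by
      have h1 := hα.1 h; have h2 := hβ.1 h; dsimp; linarith,
    fun t => ((hα.2.1 t).add (hβ.2.1 t)).div_const 2,
    by simp [hα.2.2.1, hβ.2.2.1],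
    fun t => by dsimp; rw [hα.2.2.2.1 t, hβ.2.2.2.1 t]; ring,
    by dsimp; rw [hα.2.2.2.2, hβ.2.2.2.2]; ring⟩

theorem opt_unique (hT : 0 < T) (hδ : 0 < δ) (hη : 0 < ηb)
    (hc0 : ∀ t, 0 ≤ c t) (hcI : IntegrableOn c (Set.Icc 0 T))
    (hw0 : ∀ t, 0 ≤ w t) (hwI : IntegrableOn w (Set.Icc 0 T))
    (hcne : ¬ c =ᵐ[volume.restrict (Set.Icc (0:ℝ) T)] 0)
    (hwne : ¬ w =ᵐ[volume.restrict (Set.Icc (0:ℝ) T)] 0)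
    (hpos : (∀ᵐ t ∂volume, 0 < c t) ∨ (∀ᵐ t ∂volume, 0 < w t))
    {α β : ℝ → ℝ} (hA : IsOpt T δ ηb c w α) (hB : IsOpt T δ ηb c w β) : α = β := by
  obtain ⟨hα, hAopt⟩ := hA
  obtain ⟨hβ, hBopt⟩ := hB
  set γ : ℝ → ℝ := fun t => (α t + β t) / 2 with hγdef
  have hγ : MemM T ηb γ := memM_midpoint hα hβ
  -- integrability of the three integrands
  have hIα := integrable_core (c := c) (w := w) hT hδ hη hc0 hw0 hcI hwI hα.1
    (fun t ht => hα.bdd_Icc ht)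
  have hIβ := integrable_core (c := c) (w := w) hT hδ hη hc0 hw0 hcI hwI hβ.1
    (fun t ht => hβ.bdd_Icc ht)
  have hIγ := integrable_core (c := c) (w := w) hT hδ hη hc0 hw0 hcI hwI hγ.1
    (fun t ht => hγ.bdd_Icc ht)
  have Pα := Phi_prod hT hδ hη hc0 hw0 hcI hwI hα.1 (fun t ht => hα.bdd_Icc ht)
  have Pβ := Phi_prod hT hδ hη hc0 hw0 hcI hwI hβ.1 (fun t ht => hβ.bdd_Icc ht)
  have Pγ := Phi_prod hT hδ hη hc0 hw0 hcI hwI hγ.1 (fun t ht => hγ.bdd_Icc ht)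
  set F : ℝ × ℝ → ℝ := fun p =>
    (Gfun T δ ηb c w p.1 p.2 * Real.exp (α p.2 - α p.1)
      + Gfun T δ ηb c w p.1 p.2 * Real.exp (β p.2 - β p.1)) / 2
      - Gfun T δ ηb c w p.1 p.2 * Real.exp (γ p.2 - γ p.1) with hFdef
  have hIad : Integrable (fun p : ℝ × ℝ =>
      (Gfun T δ ηb c w p.1 p.2 * Real.exp (α p.2 - α p.1)
        + Gfun T δ ηb c w p.1 p.2 * Real.exp (β p.2 - β p.1)) / 2) (Qm T) :=
    (hIα.add hIβ).div_const 2
  have hIF : Integrable F (Qm T) := hIad.sub hIγ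
  have hG0 : ∀ p : ℝ × ℝ, 0 ≤ Gfun T δ ηb c w p.1 p.2 := by
    intro p
    unfold Gfun
    have := (Kker_pos hT hδ hη p.1 p.2).le
    have := (Real.exp_pos (δ * (p.2 - p.1))).le
    have := hw0 p.1; have := hc0 p.2
    positivity
  have hmidpt : ∀ p : ℝ × ℝ,
      γ p.2 - γ p.1 = ((α p.2 - α p.1) + (β p.2 - β p.1)) / 2 := fun p => by
    simp only [hγdef]; ring
  have hF0 : ∀ p, 0 ≤ F p := by
    intro p
    have h1 := exp_midpoint_le (α p.2 - α p.1) (β p.2 - β p.1)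
    rw [← hmidpt p] at h1
    have := hG0 p
    simp only [hFdef]
    nlinarith
  -- the integral of F is ≤ 0 by optimality
  have hABeq : Phi T δ ηb c w α = Phi T δ ηb c w β :=
    le_antisymm (hAopt β hβ) (hBopt α hα)
  have hγge : Phi T δ ηb c w α ≤ Phi T δ ηb c w γ := hAopt γ hγ
  have hIntF : ∫ p, F p ∂(Qm T)
      = (Phi T δ ηb c w α + Phi T δ ηb c w β) / 2 - Phi T δ ηb c w γ := by
    rw [hFdef]
    rw [integral_sub hIad hIγ, MeasureTheory.integral_div, integral_add hIα hIβ, ← Pα, ← Pβ, ← Pγ]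
  have hFzero : ∫ p, F p ∂(Qm T) = 0 := by
    have hle : ∫ p, F p ∂(Qm T) ≤ 0 := by rw [hIntF]; linarith
    have hge : 0 ≤ ∫ p, F p ∂(Qm T) := integral_nonneg hF0
    linarith
  have hFae : F =ᶠ[ae (Qm T)] 0 :=
    (integral_eq_zero_iff_of_nonneg hF0 hIF).mp hFzero
  -- pointwise consequence
  set Δ : ℝ → ℝ := fun t => α t - β t with hΔdef
  have hae : ∀ᵐ p ∂(Qm T), w p.1 = 0 ∨ c p.2 = 0 ∨ Δ p.2 = Δ p.1 := by
    filter_upwards [hFae] with p hp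
    simp only [Pi.zero_apply] at hp
    by_cases hab : α p.2 - α p.1 = β p.2 - β p.1
    · right; right; simp only [hΔdef]; linarith
    · have hstrict := exp_midpoint_lt hab
      rw [← hmidpt p] at hstrict
      have hG : Gfun T δ ηb c w p.1 p.2 = 0 := by
        by_contra hGne
        have hGpos : 0 < Gfun T δ ηb c w p.1 p.2 := lt_of_le_of_ne (hG0 p) (Ne.symm hGne)
        have : 0 < F p := by simp only [hFdef]; nlinarith
        rw [hp] at this; linarith
      unfold Gfun at hG
      have hK := (Kker_pos hT hδ hη p.1 p.2).ne'
      have hE := (Real.exp_pos (δ * (p.2 - p.1))).ne'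
      rcases mul_eq_zero.mp hG with h | h
      · rcases mul_eq_zero.mp h with h2 | h2
        · rcases mul_eq_zero.mp h2 with h3 | h3
          · exact Or.inl h3
          · exact Or.inr (Or.inl h3)
        · exact absurd h2 hK
      · exact absurd h hE
  have hfub := Measure.ae_ae_of_ae_prod hae
  -- transfer the nonvanishing hypotheses to Ioc
  have hIccIoc : volume.restrict (Ioc (0:ℝ) T) = volume.restrict (Icc (0:ℝ) T) :=
    Measure.restrict_congr_set Ioc_ae_eq_Icc
  have hwne' : ∃ᵐ t ∂(volume.restrict (Ioc (0:ℝ) T)), w t ≠ 0 := by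
    rw [← Filter.not_eventually]
    intro hcon
    exact hwne (by rw [← hIccIoc]; filter_upwards [hcon] with t ht; exact ht)
  have hcne' : ∃ᵐ r ∂(volume.restrict (Ioc (0:ℝ) T)), c r ≠ 0 := by
    rw [← Filter.not_eventually]
    intro hcon
    exact hcne (by rw [← hIccIoc]; filter_upwards [hcon] with t ht; exact ht)
  have hμne : volume.restrict (Ioc (0:ℝ) T) ≠ 0 := by
    intro hcon
    have := congrArg (fun μ : Measure ℝ => μ (Ioc 0 T)) hcon
    simp only [Measure.restrict_apply measurableSet_Ioc, inter_self,
      Real.volume_Ioc, Measure.coe_zero, Pi.zero_apply] at this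
    rw [ENNReal.ofReal_eq_zero] at this
    linarith
  have : NeBot (ae (volume.restrict (Ioc (0:ℝ) T))) := ae_neBot.mpr hμne
  -- get a.e. constancy of Δ
  have hconst : ∃ k, ∀ᵐ t ∂(volume.restrict (Ioc (0:ℝ) T)), Δ t = k := by
    rcases hpos with hcae | hwae
    · have crestrict : ∀ᵐ r ∂(volume.restrict (Ioc (0:ℝ) T)), 0 < c r :=
        ae_restrict_of_ae hcae
      have hgood : ∀ᵐ t ∂(volume.restrict (Ioc (0:ℝ) T)),
          w t = 0 ∨ ∀ᵐ r ∂(volume.restrict (Ioc (0:ℝ) T)), Δ r = Δ t := by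
        filter_upwards [hfub] with t ht
        by_cases hw : w t = 0
        · exact Or.inl hw
        · refine Or.inr ?_
          filter_upwards [ht, crestrict] with r hr hcr
          rcases hr with h | h | h
          · exact absurd h hw
          · exact absurd h hcr.ne'
          · exact h
      obtain ⟨t₀, ht₀, hwt₀⟩ := (hgood.and_frequently hwne').exists
      rcases ht₀ with h | h
      · exact absurd h hwt₀
      · exact ⟨Δ t₀, h⟩
    · have wrestrict : ∀ᵐ t ∂(volume.restrict (Ioc (0:ℝ) T)), 0 < w t :=
        ae_restrict_of_ae hwae
      have hgood : ∀ᵐ t ∂(volume.restrict (Ioc (0:ℝ) T)),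
          ∀ᵐ r ∂(volume.restrict (Ioc (0:ℝ) T)), c r = 0 ∨ Δ r = Δ t := by
        filter_upwards [hfub, wrestrict] with t ht hwt
        filter_upwards [ht] with r hr
        rcases hr with h | h | h
        · exact absurd h hwt.ne'
        · exact Or.inl h
        · exact Or.inr h
      obtain ⟨t₀, ht₀⟩ := hgood.exists
      refine ⟨Δ t₀, ?_⟩
      filter_upwards [hgood] with t ht
      obtain ⟨r, ⟨h1, h2⟩, h3⟩ := ((ht.and ht₀).and_frequently hcne').exists
      rcases h1 with h | h
      · exact absurd h h3
      · rcases h2 with h' | h'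
        · exact absurd h' h3
        · rw [← h, h']
  obtain ⟨k, hk⟩ := hconst
  exact memM_eq_of_ae_diff hT hα hβ hk

end uniq2

section exist
variable {T δ ηb : ℝ} {c w : ℝ → ℝ}

lemma MemM.lb {α : ℝ → ℝ} (hα : MemM T ηb α) (hT : 0 < T) (hη : 0 < ηb) (t : ℝ) :
    ηb * (t - T) ≤ α t := by
  have h := hα.int_key ⌊t / T⌋ (t - ⌊t / T⌋ * T)
  rw [sub_add_cancel] at h
  have h3 : (⌊t / T⌋ : ℝ) * T ≤ t := by
    have h := mul_le_mul_of_nonneg_right (Int.floor_le (t / T)) hT.le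
    rwa [div_mul_cancel₀ _ hT.ne'] at h
  have h4 : t < (⌊t / T⌋ : ℝ) * T + T := by
    have h := mul_lt_mul_of_pos_right (Int.lt_floor_add_one (t / T)) hT
    rw [div_mul_cancel₀ _ hT.ne'] at h
    linarith
  have h1 : t - ⌊t / T⌋ * T ∈ Icc 0 T := ⟨by linarith, by linarith⟩
  have h2 := hα.bdd_Icc h1
  have e1 : ηb * (t - T) ≤ ηb * ((⌊t / T⌋ : ℝ) * T) := by
    apply mul_le_mul_of_nonneg_left (by linarith) hη.le
  have : ηb * ((⌊t / T⌋ : ℝ) * T) = (⌊t / T⌋ : ℝ) * (T * ηb) := by ring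
  rw [this] at e1
  linarith [h2.1]

lemma Phi_nonneg (hT : 0 < T) (hδ : 0 < δ) (hη : 0 < ηb)
    (hc0 : ∀ t, 0 ≤ c t) (hw0 : ∀ t, 0 ≤ w t)
    (hcI : IntegrableOn c (Set.Icc 0 T)) (hwI : IntegrableOn w (Set.Icc 0 T))
    {α : ℝ → ℝ} (hα : MemM T ηb α) : 0 ≤ Phi T δ ηb c w α := by
  rw [Phi_prod hT hδ hη hc0 hw0 hcI hwI hα.1 (fun t ht => hα.bdd_Icc ht)]
  apply MeasureTheory.integral_nonneg
  intro p
  have := (Kker_pos hT hδ hη p.1 p.2).le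
  have := (Real.exp_pos (δ * (p.2 - p.1))).le
  have := (Real.exp_pos (α p.2 - α p.1)).le
  have := hw0 p.1; have := hc0 p.2
  unfold Gfun
  positivity

theorem opt_exists (hT : 0 < T) (hδ : 0 < δ) (hη : 0 < ηb)
    (hc0 : ∀ t, 0 ≤ c t) (hcI : IntegrableOn c (Set.Icc 0 T))
    (hw0 : ∀ t, 0 ≤ w t) (hwI : IntegrableOn w (Set.Icc 0 T)) :
    ∃ α, IsOpt T δ ηb c w α := by
  classical
  set S : Set ℝ := {v : ℝ | ∃ α, MemM T ηb α ∧ Phi T δ ηb c w α = v} with hSdef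
  have hSne : S.Nonempty := ⟨_, _, memM_linear hη.le, rfl⟩
  have hSbb : BddBelow S := by
    refine ⟨0, fun v hv => ?_⟩
    obtain ⟨α, hα, rfl⟩ := hv
    exact Phi_nonneg hT hδ hη hc0 hw0 hcI hwI hα
  set m := sInf S with hm
  have hminseq : ∀ n : ℕ, ∃ α, MemM T ηb α ∧ Phi T δ ηb c w α < m + 1 / (n + 1) := by
    intro n
    have : m < m + 1 / (n + 1) := by
      have : (0:ℝ) < 1 / (n+1) := by positivity
      linarith
    obtain ⟨v, hv, hvlt⟩ := exists_lt_of_csInf_lt hSne this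
    obtain ⟨α, hα, rfl⟩ := hv
    exact ⟨α, hα, hvlt⟩
  choose a hmem hlt using hminseq
  have hmle : ∀ n, m ≤ Phi T δ ηb c w (a n) := fun n =>
    csInf_le hSbb ⟨a n, hmem n, rfl⟩
  have hPhiT : Tendsto (fun n => Phi T δ ηb c w (a n)) atTop (𝓝 m) := by
    have h1 : Tendsto (fun n : ℕ => m + 1 / ((n:ℝ) + 1)) atTop (𝓝 m) := by
      have : Tendsto (fun n : ℕ => 1 / ((n:ℝ) + 1)) atTop (𝓝 0) := tendsto_one_div_add_atTop_nhds_zero_nat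
      have h2 := this.const_add m
      simpa using h2
    exact tendsto_of_tendsto_of_tendsto_of_le_of_le tendsto_const_nhds h1 hmle
      (fun n => (hlt n).le)
  -- compactness extraction on a countable dense T-invariant set
  set e : ℚ × ℤ → ℝ := fun p => (p.1 : ℝ) + (p.2 : ℝ) * T with hedef
  set B : ℚ × ℤ → ℝ := fun p => ηb * (|e p| + T) with hBdef
  have hymem : ∀ n p, a n (e p) ∈ Icc (-(B p)) (B p) := by
    intro n p
    have h2 := abs_le.mp ((hmem n).abs_le hT hη (e p))
    exact ⟨h2.1, h2.2⟩
  set y : ℕ → (∀ p : ℚ × ℤ, Icc (-(B p)) (B p)) := fun n p => ⟨a n (e p), hymem n p⟩ with hy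
  obtain ⟨g, -, φ, hφ, hgt⟩ := (isCompact_univ.isSeqCompact :
    IsSeqCompact (univ : Set (∀ p : ℚ × ℤ, Icc (-(B p)) (B p)))) (fun n => mem_univ (y n))
  set v : ℚ × ℤ → ℝ := fun p => (g p : ℝ) with hv
  have hcoord : ∀ p, Tendsto (fun k => a (φ k) (e p)) atTop (𝓝 (v p)) := by
    intro p
    exact (continuous_subtype_val.tendsto _).comp (tendsto_pi_nhds.mp hgt p)
  have hvmono : ∀ p p', e p ≤ e p' → v p ≤ v p' := fun p p' h =>
    le_of_tendsto_of_tendsto' (hcoord p) (hcoord p') (fun k => (hmem (φ k)).1 h)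
  have hvlb : ∀ p, ηb * (e p - T) ≤ v p := fun p =>
    le_of_tendsto_of_tendsto' tendsto_const_nhds (hcoord p)
      (fun k => (hmem (φ k)).lb hT hη (e p))
  have hvshift : ∀ (q : ℚ) (mm : ℤ), v (q, mm + 1) = v (q, mm) + T * ηb := by
    intro q mm
    have he1 : e (q, mm + 1) = e (q, mm) + T := by simp only [hedef]; push_cast; ring
    have hseq : (fun k => a (φ k) (e (q, mm + 1)))
        = fun k => a (φ k) (e (q, mm)) + T * ηb := by
      funext k
      rw [he1, (hmem (φ k)).2.2.2.1, (hmem (φ k)).2.2.2.2]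
    have h2 : Tendsto (fun k => a (φ k) (e (q, mm)) + T * ηb) atTop (𝓝 (v (q, mm) + T * ηb)) :=
      (hcoord (q, mm)).add tendsto_const_nhds
    exact tendsto_nhds_unique (hseq ▸ hcoord (q, mm + 1)) h2
  -- the candidate minimizer (up to normalization)
  set SS : ℝ → Set ℝ := fun t => v '' {p : ℚ × ℤ | t < e p} with hSS
  have hSSne : ∀ t, (SS t).Nonempty := by
    intro t
    obtain ⟨q, hq⟩ := exists_rat_gt t
    exact ⟨v (q, 0), ⟨(q, 0), by simp only [mem_setOf_eq, hedef]; push_cast; simpa using hq, rfl⟩⟩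
  have hSSbb : ∀ t, BddBelow (SS t) := by
    intro t
    refine ⟨ηb * (t - T), ?_⟩
    rintro x ⟨p, hp, rfl⟩
    exact le_trans (mul_le_mul_of_nonneg_left (by linarith [mem_setOf_eq ▸ hp]) hη.le) (hvlb p)
  set A : ℝ → ℝ := fun t => sInf (SS t) with hA
  have hAmono : Monotone A := by
    intro s t hst
    apply csInf_le_csInf (hSSbb s) (hSSne t)
    rintro x ⟨p, hp, rfl⟩
    exact ⟨p, lt_of_le_of_lt hst hp, rfl⟩
  have hAle : ∀ t p, t < e p → A t ≤ v p := fun t p h => csInf_le (hSSbb t) ⟨p, h, rfl⟩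
  have hAper : ∀ t, A (t + T) = A t + T * ηb := by
    intro t
    apply le_antisymm
    · have h1 : ∀ x ∈ SS t, A (t + T) - T * ηb ≤ x := by
        rintro x ⟨⟨q, mm⟩, hp, rfl⟩
        have he1 : e (q, mm + 1) = e (q, mm) + T := by simp only [hedef]; push_cast; ring
        have : A (t + T) ≤ v (q, mm + 1) := hAle _ _ (by rw [he1]; linarith [mem_setOf_eq ▸ hp])
        rw [hvshift q mm] at this
        linarith
      have := le_csInf (hSSne t) h1
      linarith [this]
    · have h1 : ∀ x ∈ SS (t + T), A t + T * ηb ≤ x := by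
        rintro x ⟨⟨q, mm⟩, hp, rfl⟩
        have he1 : e (q, mm - 1) = e (q, mm) - T := by simp only [hedef]; push_cast; ring
        have h2 : A t ≤ v (q, mm - 1) := hAle _ _ (by rw [he1]; linarith [mem_setOf_eq ▸ hp])
        have h3 := hvshift q (mm - 1)
        rw [sub_add_cancel] at h3
        linarith
      exact le_csInf (hSSne (t + T)) h1
  have hArc : ∀ t, ContinuousWithinAt A (Ici t) t := by
    intro t
    rw [ContinuousWithinAt]
    rw [tendsto_order]
    constructor
    · intro x hx
      filter_upwards [self_mem_nhdsWithin] with s hs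
      exact lt_of_lt_of_le hx (hAmono hs)
    · intro b hb
      obtain ⟨x, ⟨p, hp, rfl⟩, hxb⟩ := exists_lt_of_csInf_lt (hSSne t) hb
      have h1 : ∀ᶠ s in 𝓝[Ici t] t, s < e p :=
        eventually_nhdsWithin_of_eventually_nhds (eventually_lt_nhds hp)
      filter_upwards [h1] with s hs
      exact lt_of_le_of_lt (hAle s p hs) hxb
  -- convergence at continuity points of A
  have hconv : ∀ t, ContinuousAt A t → Tendsto (fun k => a (φ k) t) atTop (𝓝 (A t)) := by
    intro t hcont
    rw [tendsto_order]
    constructor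
    · intro x hx
      have h1 : ∀ᶠ s in 𝓝 t, x < A s := hcont.eventually (eventually_gt_nhds hx)
      have h2 : ∀ᶠ s in 𝓝[<] t, x < A s ∧ s < t :=
        (eventually_nhdsWithin_of_eventually_nhds h1).and eventually_mem_nhdsWithin
      obtain ⟨s, hxs, hst⟩ := h2.exists
      obtain ⟨q, hsq, hqt⟩ := exists_rat_btwn hst
      have hsq' : s < e (q, 0) := by simp only [hedef]; push_cast; simpa using hsq
      have hqv : x < v (q, 0) := lt_of_lt_of_le hxs (hAle s (q, 0) hsq')
      filter_upwards [(hcoord (q, 0)).eventually (eventually_gt_nhds hqv)] with k hk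
      refine lt_of_lt_of_le hk ((hmem (φ k)).1 ?_)
      simp only [hedef]; push_cast; simpa using hqt.le
    · intro b hb
      obtain ⟨x, ⟨p, hp, rfl⟩, hxb⟩ := exists_lt_of_csInf_lt (hSSne t) hb
      filter_upwards [(hcoord p).eventually (eventually_lt_nhds hxb)] with k hk
      exact lt_of_le_of_lt ((hmem (φ k)).1 (mem_setOf_eq ▸ hp).le) hk
  -- the normalized minimizer
  set αh : ℝ → ℝ := fun t => A t - A 0 with hαh
  have hA0T : A T = A 0 + T * ηb := by
    have := hAper 0
    rwa [zero_add] at this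
  have hαhM : MemM T ηb αh := by
    have h0 : αh 0 = 0 := sub_self _
    have hTT : αh T = T * ηb := by
      simp only [hαh]; rw [hA0T]; ring
    refine ⟨fun s t h => sub_le_sub_right (hAmono h) _,
      fun t => (hArc t).sub continuousWithinAt_const, h0, fun t => ?_, hTT⟩
    simp only [hαh]
    rw [hAper t, hA0T]
    ring
  refine ⟨αh, hαhM, fun β hβ => ?_⟩
  -- it suffices to show Phi αh = m
  suffices hPhm : Phi T δ ηb c w αh = m by
    rw [hPhm]
    exact csInf_le hSbb ⟨β, hβ, rfl⟩
  -- dominated convergence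
  have hbadnull : (Qm T) {p : ℝ × ℝ | ¬(ContinuousAt A p.1 ∧ ContinuousAt A p.2)} = 0 := by
    set Db : Set ℝ := {x | ¬ContinuousAt A x} with hDb
    have hDbc : Db.Countable := hAmono.countable_not_continuousAt
    have hDb0 : (volume.restrict (Ioc (0:ℝ) T)) Db = 0 := by
      rw [Measure.restrict_apply₀' measurableSet_Ioc.nullMeasurableSet]
      exact measure_mono_null inter_subset_left (hDbc.measure_zero _)
    have hsub : {p : ℝ × ℝ | ¬(ContinuousAt A p.1 ∧ ContinuousAt A p.2)}
        ⊆ (Db ×ˢ univ) ∪ (univ ×ˢ Db) := by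
      intro p hp
      simp only [mem_setOf_eq, not_and_or] at hp
      rcases hp with h | h
      · exact Or.inl ⟨h, mem_univ _⟩
      · exact Or.inr ⟨mem_univ _, h⟩
    apply measure_mono_null hsub
    apply measure_union_null
    · unfold Qm
      rw [Measure.prod_prod, hDb0, zero_mul]
    · unfold Qm
      rw [Measure.prod_prod, hDb0, mul_zero]
  have haeconv : ∀ᵐ p ∂(Qm T),
      Tendsto (fun k => Gfun T δ ηb c w p.1 p.2 * Real.exp (a (φ k) p.2 - a (φ k) p.1)) atTop
        (𝓝 (Gfun T δ ηb c w p.1 p.2 * Real.exp (A p.2 - A p.1))) := by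
    have hgood : ∀ᵐ p ∂(Qm T), ContinuousAt A p.1 ∧ ContinuousAt A p.2 := ae_iff.mpr hbadnull
    filter_upwards [hgood] with p hp
    have h1 := (hconv p.2 hp.2).sub (hconv p.1 hp.1)
    exact ((Real.continuous_exp.tendsto _).comp h1).const_mul _
  have hDCT : Tendsto (fun k => ∫ p, Gfun T δ ηb c w p.1 p.2 *
        Real.exp (a (φ k) p.2 - a (φ k) p.1) ∂(Qm T)) atTop
      (𝓝 (∫ p, Gfun T δ ηb c w p.1 p.2 * Real.exp (A p.2 - A p.1) ∂(Qm T))) := by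
    have hwc := integrable_wc (T := T) (c := c) (w := w) hcI hwI
    exact tendsto_integral_of_dominated_convergence _
      (fun k => core_aesm hcI hwI (hmem (φ k)).1)
      (hwc.const_mul _)
      (fun k => core_bound hT hδ hη hc0 hw0 (fun t ht => (hmem (φ k)).bdd_Icc ht))
      haeconv
  have hPhik : (fun k => Phi T δ ηb c w (a (φ k)))
      = fun k => ∫ p, Gfun T δ ηb c w p.1 p.2 *
          Real.exp (a (φ k) p.2 - a (φ k) p.1) ∂(Qm T) := by
    funext k
    exact Phi_prod hT hδ hη hc0 hw0 hcI hwI (hmem (φ k)).1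
      (fun t ht => (hmem (φ k)).bdd_Icc ht)
  have hsubseq : Tendsto (fun k => Phi T δ ηb c w (a (φ k))) atTop (𝓝 m) :=
    hPhiT.comp hφ.tendsto_atTop
  rw [hPhik] at hsubseq
  have hlimeq : ∫ p, Gfun T δ ηb c w p.1 p.2 * Real.exp (A p.2 - A p.1) ∂(Qm T) = m :=
    tendsto_nhds_unique hDCT hsubseq
  rw [Phi_prod hT hδ hη hc0 hw0 hcI hwI hαhM.1 (fun t ht => hαhM.bdd_Icc ht)]
  rw [← hlimeq]
  refine MeasureTheory.integral_congr_ae (ae_of_all _ fun p => ?_)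
  have heq : αh p.2 - αh p.1 = A p.2 - A p.1 := by simp only [hαh]; ring
  dsimp only
  rw [heq]
end exist


theorem stmt4 (T δ ηb : ℝ) (c w : ℝ → ℝ)
    (hT : 0 < T) (hδ : 0 < δ) (hη : 0 < ηb)
    (hc0 : ∀ t, 0 ≤ c t) (hcP : ∀ t, c (t + T) = c t) (hcI : IntegrableOn c (Set.Icc 0 T))
    (hw0 : ∀ t, 0 ≤ w t) (hwP : ∀ t, w (t + T) = w t) (hwI : IntegrableOn w (Set.Icc 0 T))
    (hcne : ¬ c =ᵐ[volume.restrict (Set.Icc (0:ℝ) T)] 0)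
    (hwne : ¬ w =ᵐ[volume.restrict (Set.Icc (0:ℝ) T)] 0)
    (hpos : (∀ᵐ t ∂volume, 0 < c t) ∨ (∀ᵐ t ∂volume, 0 < w t)) :
    ∃! α : ℝ → ℝ, IsOpt T δ ηb c w α := by
  obtain ⟨α, hα⟩ := opt_exists hT hδ hη hc0 hcI hw0 hwI
  exact ⟨α, hα, fun β hβ =>
    opt_unique hT hδ hη hc0 hcI hw0 hwI hcne hwne hpos hβ hα⟩
end

section
/- First-order optimality criterion: α ∈ M(T, η̄) equals the unique minimizer α_opt of Φ over M(T, η̄) if and only if ∫₀ᵀ h[α](t) α̃(t) dt ≤ ∫₀ᵀ h[α](t) α(t) dt for every α̃ ∈ M(T, η̄). -/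
open MeasureTheory intervalIntegral Real Set Filter Topology

namespace Stmt6Helper

/-- the integrand of the double-integral representation of `Phi`. -/
noncomputable def Pf (T δ ηb : ℝ) (c w γ : ℝ → ℝ) (z : ℝ × ℝ) : ℝ :=
  w z.1 * Real.exp (-(γ z.1) - δ * z.1) *
    (Kker T δ ηb z.1 z.2 * c z.2 * Real.exp (γ z.2 + δ * z.2))

noncomputable def Kb (T δ ηb : ℝ) : ℝ :=
  max ((1 - Real.exp (-(ηb + δ) * T))⁻¹) ((Real.exp ((ηb + δ) * T) - 1)⁻¹)

noncomputable abbrev nuT (T : ℝ) : Measure ℝ := (volume : Measure ℝ).restrict (Set.Ioc (0:ℝ) T)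

noncomputable abbrev mu2 (T : ℝ) : Measure (ℝ × ℝ) := (nuT T).prod (nuT T)

variable {T δ ηb : ℝ} {c w : ℝ → ℝ}

lemma abs_sub'' (a b : ℝ) : |a - b| ≤ |a| + |b| := by
  rw [sub_eq_add_neg]
  exact (abs_add_le a (-b)).trans_eq (by rw [abs_neg])

lemma Kker_pos (hT : 0 < T) (hδ : 0 < δ) (hη : 0 < ηb) (t r : ℝ) :
    0 < Kker T δ ηb t r := by
  have hx : 0 < (ηb + δ) * T := by positivity
  unfold Kker
  split
  · have h1 : Real.exp (-(ηb + δ) * T) < 1 := by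
      rw [Real.exp_lt_one_iff]; nlinarith
    exact inv_pos.mpr (by linarith)
  · have h1 : 1 < Real.exp ((ηb + δ) * T) := by
      rw [← Real.exp_zero]; exact Real.exp_lt_exp.mpr hx
    exact inv_pos.mpr (by linarith)

lemma Kker_le_Kb (t r : ℝ) : Kker T δ ηb t r ≤ Kb T δ ηb := by
  unfold Kker Kb; split
  · exact le_max_left _ _
  · exact le_max_right _ _

lemma measurable_Kker : Measurable (fun z : ℝ × ℝ => Kker T δ ηb z.1 z.2) := by
  unfold Kker
  exact Measurable.ite (measurableSet_lt measurable_snd measurable_fst)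
    measurable_const measurable_const

lemma ae_square (T : ℝ) :
    ∀ᵐ z ∂(mu2 T), z ∈ Set.Ioc (0:ℝ) T ×ˢ Set.Ioc (0:ℝ) T := by
  have h : mu2 T = ((volume : Measure ℝ).prod (volume : Measure ℝ)).restrict
      (Set.Ioc (0:ℝ) T ×ˢ Set.Ioc (0:ℝ) T) := Measure.prod_restrict _ _
  rw [h]
  exact ae_restrict_mem (measurableSet_Ioc.prod measurableSet_Ioc)

lemma Pf_nonneg (hT : 0 < T) (hδ : 0 < δ) (hη : 0 < ηb)
    (hc0 : ∀ t, 0 ≤ c t) (hw0 : ∀ t, 0 ≤ w t) (γ : ℝ → ℝ) (z : ℝ × ℝ) :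
    0 ≤ Pf T δ ηb c w γ z := by
  unfold Pf
  exact mul_nonneg (mul_nonneg (hw0 _) (Real.exp_pos _).le)
    (mul_nonneg (mul_nonneg (Kker_pos hT hδ hη _ _).le (hc0 _)) (Real.exp_pos _).le)

/-- integrability workhorse -/
lemma Pf_int (hT : 0 < T) (hδ : 0 < δ) (hη : 0 < ηb)
    (hc0 : ∀ t, 0 ≤ c t) (hcI : IntegrableOn c (Set.Icc 0 T))
    (hw0 : ∀ t, 0 ≤ w t) (hwI : IntegrableOn w (Set.Icc 0 T))
    {γ : ℝ → ℝ} (hγm : Measurable γ)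
    (hγb : ∀ t ∈ Set.Ioc (0:ℝ) T, 0 ≤ γ t ∧ γ t ≤ T * ηb)
    {u : ℝ × ℝ → ℝ} (hum : Measurable u) {Mu : ℝ}
    (hub : ∀ z ∈ Set.Ioc (0:ℝ) T ×ˢ Set.Ioc (0:ℝ) T, |u z| ≤ Mu) :
    Integrable (fun z => Pf T δ ηb c w γ z * u z) (mu2 T) := by
  have hw1 : Integrable w (nuT T) := hwI.mono_set Set.Ioc_subset_Icc_self
  have hc1 : Integrable c (nuT T) := hcI.mono_set Set.Ioc_subset_Icc_self
  have hbase : Integrable (fun z : ℝ × ℝ => w z.1 * c z.2) (mu2 T) := hw1.mul_prod hc1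
  have m1 : Measurable (fun z : ℝ × ℝ => Real.exp (-(γ z.1) - δ * z.1)) :=
    Real.measurable_exp.comp (((hγm.comp measurable_fst).neg).sub
      (measurable_const.mul measurable_fst))
  have m2 : Measurable (fun z : ℝ × ℝ => Real.exp (γ z.2 + δ * z.2)) :=
    Real.measurable_exp.comp ((hγm.comp measurable_snd).add
      (measurable_const.mul measurable_snd))
  have aw : AEMeasurable (fun z : ℝ × ℝ => w z.1) (mu2 T) :=
    hw1.aestronglyMeasurable.comp_fst.aemeasurable
  have ac : AEMeasurable (fun z : ℝ × ℝ => c z.2) (mu2 T) :=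
    hc1.aestronglyMeasurable.comp_snd.aemeasurable
  have haesm : AEStronglyMeasurable (fun z => Pf T δ ηb c w γ z * u z) (mu2 T) := by
    apply AEMeasurable.aestronglyMeasurable
    simp only [Pf]
    exact ((aw.mul m1.aemeasurable).mul
      ((measurable_Kker.aemeasurable.mul ac).mul m2.aemeasurable)).mul hum.aemeasurable
  refine Integrable.mono' (hbase.const_mul (Kb T δ ηb * Real.exp (T * ηb + δ * T) * Mu))
    haesm ?_
  filter_upwards [ae_square T] with z hz
  obtain ⟨hz1, hz2⟩ := hz
  have hK0 : 0 ≤ Kker T δ ηb z.1 z.2 := (Kker_pos hT hδ hη _ _).le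
  have hKb : Kker T δ ηb z.1 z.2 ≤ Kb T δ ηb := Kker_le_Kb _ _
  have hKb0 : 0 ≤ Kb T δ ηb := hK0.trans hKb
  have he1 : Real.exp (-(γ z.1) - δ * z.1) ≤ 1 := by
    rw [Real.exp_le_one_iff]
    have h1 := (hγb z.1 hz1).1
    have h2 := hz1.1
    nlinarith
  have he2 : Real.exp (γ z.2 + δ * z.2) ≤ Real.exp (T * ηb + δ * T) := by
    apply Real.exp_le_exp.mpr
    have h1 := (hγb z.2 hz2).2
    have h2 := hz2.2
    nlinarith
  have hPf0 : 0 ≤ Pf T δ ηb c w γ z := Pf_nonneg hT hδ hη hc0 hw0 γ z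
  rw [Real.norm_eq_abs, abs_mul, abs_of_nonneg hPf0]
  have b1 : w z.1 * Real.exp (-(γ z.1) - δ * z.1) ≤ w z.1 := by
    calc w z.1 * Real.exp (-(γ z.1) - δ * z.1) ≤ w z.1 * 1 :=
          mul_le_mul_of_nonneg_left he1 (hw0 _)
      _ = w z.1 := mul_one _
  have b2 : Kker T δ ηb z.1 z.2 * c z.2 * Real.exp (γ z.2 + δ * z.2)
      ≤ Kb T δ ηb * c z.2 * Real.exp (T * ηb + δ * T) := by
    apply mul_le_mul (mul_le_mul hKb le_rfl (hc0 _) hKb0) he2 (Real.exp_pos _).le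
    exact mul_nonneg hKb0 (hc0 _)
  have hmain : Pf T δ ηb c w γ z * |u z|
      ≤ (w z.1 * (Kb T δ ηb * c z.2 * Real.exp (T * ηb + δ * T))) * Mu := by
    unfold Pf
    apply mul_le_mul _ (hub z ⟨hz1, hz2⟩) (abs_nonneg _)
    · exact mul_nonneg (hw0 _)
        (mul_nonneg (mul_nonneg hKb0 (hc0 _)) (Real.exp_pos _).le)
    · exact mul_le_mul b1 b2
        (mul_nonneg (mul_nonneg hK0 (hc0 _)) (Real.exp_pos _).le) (hw0 _)
  calc Pf T δ ηb c w γ z * |u z|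
      ≤ (w z.1 * (Kb T δ ηb * c z.2 * Real.exp (T * ηb + δ * T))) * Mu := hmain
    _ = Kb T δ ηb * Real.exp (T * ηb + δ * T) * Mu * (w z.1 * c z.2) := by ring

lemma Phi_repr (hT : 0 < T) {γ : ℝ → ℝ}
    (hint : Integrable (Pf T δ ηb c w γ) (mu2 T)) :
    Phi T δ ηb c w γ = ∫ z, Pf T δ ηb c w γ z ∂(mu2 T) := by
  have h1 : ∀ t, w t * Sfun T δ ηb c γ t = ∫ r in (0:ℝ)..T, Pf T δ ηb c w γ (t, r) := by
    intro t
    have h2 : ∫ r in (0:ℝ)..T, Pf T δ ηb c w γ (t, r)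
        = (w t * Real.exp (-(γ t) - δ * t)) *
          ∫ r in (0:ℝ)..T, Kker T δ ηb t r * c r * Real.exp (γ r + δ * r) := by
      simp only [Pf]
      exact intervalIntegral.integral_const_mul _ _
    rw [h2]; unfold Sfun; ring
  unfold Phi
  rw [intervalIntegral.integral_congr (fun t _ => h1 t)]
  rw [intervalIntegral.integral_of_le hT.le]
  simp_rw [intervalIntegral.integral_of_le hT.le]
  exact integral_integral hint

lemma Pf_ratio (γ α : ℝ → ℝ) (z : ℝ × ℝ) :
    Pf T δ ηb c w γ z = Pf T δ ηb c w α z *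
      Real.exp ((γ z.2 - α z.2) - (γ z.1 - α z.1)) := by
  have e1 : Real.exp (-(γ z.1) - δ * z.1)
      = Real.exp (-(α z.1) - δ * z.1) * Real.exp (α z.1 - γ z.1) := by
    rw [← Real.exp_add]; congr 1; ring
  have e2 : Real.exp (γ z.2 + δ * z.2)
      = Real.exp (α z.2 + δ * z.2) * Real.exp (γ z.2 - α z.2) := by
    rw [← Real.exp_add]; congr 1; ring
  have e3 : Real.exp ((γ z.2 - α z.2) - (γ z.1 - α z.1))
      = Real.exp (α z.1 - γ z.1) * Real.exp (γ z.2 - α z.2) := by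
    rw [← Real.exp_add]; congr 1; ring
  unfold Pf
  rw [e1, e2, e3]
  ring

/-- representation of `∫ hfun * v` as a double integral. -/
lemma h_repr (hT : 0 < T) (hδ : 0 < δ) (hη : 0 < ηb)
    (hc0 : ∀ t, 0 ≤ c t) (hcI : IntegrableOn c (Set.Icc 0 T))
    (hw0 : ∀ t, 0 ≤ w t) (hwI : IntegrableOn w (Set.Icc 0 T))
    {α : ℝ → ℝ} (hαm : Measurable α)
    (hαb : ∀ t ∈ Set.Ioc (0:ℝ) T, 0 ≤ α t ∧ α t ≤ T * ηb)
    {v : ℝ → ℝ} (hvm : Measurable v) {Mv : ℝ}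
    (hvb : ∀ t ∈ Set.Ioc (0:ℝ) T, |v t| ≤ Mv) :
    ∫ t in (0:ℝ)..T, hfun T δ ηb c w α t * v t
      = ∫ z, Pf T δ ηb c w α z * (v z.1 - v z.2) ∂(mu2 T) := by
  have hFA : Integrable (fun z => Pf T δ ηb c w α z * v z.1) (mu2 T) :=
    Pf_int hT hδ hη hc0 hcI hw0 hwI hαm hαb (hvm.comp measurable_fst)
      (fun z hz => hvb z.1 hz.1)
  have hFS : Integrable (fun z => Pf T δ ηb c w α z * v z.2) (mu2 T) :=
    Pf_int hT hδ hη hc0 hcI hw0 hwI hαm hαb (hvm.comp measurable_snd)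
      (fun z hz => hvb z.2 hz.2)
  have hFB : Integrable (fun z : ℝ × ℝ => Pf T δ ηb c w α (z.2, z.1) * v z.1) (mu2 T) := by
    have h := hFS.swap
    exact h.congr (Eventually.of_forall fun z => rfl)
  have key_t : ∀ t, hfun T δ ηb c w α t * v t =
      (∫ r in (0:ℝ)..T, Pf T δ ηb c w α (t, r) * v t) -
        ∫ r in (0:ℝ)..T, Pf T δ ηb c w α (r, t) * v t := by
    intro t
    have e1 : ∫ r in (0:ℝ)..T, Pf T δ ηb c w α (t, r) * v t
        = (w t * Real.exp (-(α t) - δ * t) *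
            ∫ r in (0:ℝ)..T, Kker T δ ηb t r * c r * Real.exp (α r + δ * r)) * v t := by
      simp only [Pf]
      rw [intervalIntegral.integral_mul_const, intervalIntegral.integral_const_mul]
    have e2 : ∫ r in (0:ℝ)..T, Pf T δ ηb c w α (r, t) * v t
        = (c t * Real.exp (α t + δ * t) *
            ∫ r in (0:ℝ)..T, Kker T δ ηb r t * w r * Real.exp (-(α r) - δ * r)) * v t := by
      rw [intervalIntegral.integral_mul_const]
      congr 1
      rw [show (c t * Real.exp (α t + δ * t) *
            ∫ r in (0:ℝ)..T, Kker T δ ηb r t * w r * Real.exp (-(α r) - δ * r))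
          = (∫ r in (0:ℝ)..T, Kker T δ ηb r t * w r * Real.exp (-(α r) - δ * r)) *
              (c t * Real.exp (α t + δ * t)) from by ring,
        ← intervalIntegral.integral_mul_const]
      apply intervalIntegral.integral_congr
      intro r _
      simp only [Pf]
      ring
    rw [e1, e2]
    unfold hfun
    ring
  rw [intervalIntegral.integral_congr (fun t _ => key_t t)]
  rw [intervalIntegral.integral_of_le hT.le]
  simp_rw [intervalIntegral.integral_of_le hT.le]
  have hA : Integrable (fun t => ∫ r, Pf T δ ηb c w α (t, r) * v t ∂(nuT T)) (nuT T) :=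
    hFA.integral_prod_left
  have hB : Integrable (fun t => ∫ r, Pf T δ ηb c w α (r, t) * v t ∂(nuT T)) (nuT T) :=
    hFB.integral_prod_left
  rw [MeasureTheory.integral_sub hA hB]
  have f1 : (∫ t, ∫ r, Pf T δ ηb c w α (t, r) * v t ∂(nuT T) ∂(nuT T))
      = ∫ z, Pf T δ ηb c w α z * v z.1 ∂(mu2 T) := integral_integral hFA
  have f2 : (∫ t, ∫ r, Pf T δ ηb c w α (r, t) * v t ∂(nuT T) ∂(nuT T))
      = ∫ z : ℝ × ℝ, Pf T δ ηb c w α (z.2, z.1) * v z.1 ∂(mu2 T) := integral_integral hFB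
  have f3 : (∫ z : ℝ × ℝ, Pf T δ ηb c w α (z.2, z.1) * v z.1 ∂(mu2 T))
      = ∫ z, Pf T δ ηb c w α z * v z.2 ∂(mu2 T) :=
    integral_prod_swap (fun z : ℝ × ℝ => Pf T δ ηb c w α z * v z.2)
  rw [f1, f2, f3, ← MeasureTheory.integral_sub hFA hFS]
  exact integral_congr_ae (Eventually.of_forall fun z => by ring)

lemma memM_convex {α β : ℝ → ℝ} (hα : MemM T ηb α) (hβ : MemM T ηb β)
    {ε : ℝ} (h0 : 0 ≤ ε) (h1 : ε ≤ 1) :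
    MemM T ηb (fun t => α t + ε * (β t - α t)) := by
  obtain ⟨hαmono, hαcont, hα0, hαper, hαT⟩ := hα
  obtain ⟨hβmono, hβcont, hβ0, hβper, hβT⟩ := hβ
  refine ⟨?_, ?_, ?_, ?_, ?_⟩
  · intro s t hst
    have h2 := hαmono hst
    have h3 := hβmono hst
    simp only
    nlinarith [mul_nonneg h0 (sub_nonneg.mpr h3), mul_nonneg (sub_nonneg.mpr h1)
      (sub_nonneg.mpr h2)]
  · intro t
    exact (hαcont t).add (continuousWithinAt_const.mul ((hβcont t).sub (hαcont t)))
  · simp [hα0, hβ0]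
  · intro t
    simp only [hαper t, hβper t]
    ring
  · simp only [hαT, hβT]
    ring

lemma memM_bounds {γ : ℝ → ℝ} (hγ : MemM T ηb γ) :
    ∀ t ∈ Set.Ioc (0:ℝ) T, 0 ≤ γ t ∧ γ t ≤ T * ηb := by
  intro t ht
  constructor
  · calc (0:ℝ) = γ 0 := hγ.2.2.1.symm
      _ ≤ γ t := hγ.1 ht.1.le
  · calc γ t ≤ γ T := hγ.1 ht.2
      _ = T * ηb := hγ.2.2.2.2

lemma exp_quad {x : ℝ} (hx : |x| ≤ 1) : Real.exp x ≤ 1 + x + x ^ 2 := by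
  have h := Real.abs_exp_sub_one_sub_id_le hx
  have h2 := abs_le.mp h
  linarith [h2.2]

end Stmt6Helper

open Stmt6Helper

set_option maxHeartbeats 1600000 in
theorem stmt6 (T δ ηb : ℝ) (c w α : ℝ → ℝ)
    (hT : 0 < T) (hδ : 0 < δ) (hη : 0 < ηb)
    (hc0 : ∀ t, 0 ≤ c t) (hcP : ∀ t, c (t + T) = c t) (hcI : IntegrableOn c (Set.Icc 0 T))
    (hw0 : ∀ t, 0 ≤ w t) (hwP : ∀ t, w (t + T) = w t) (hwI : IntegrableOn w (Set.Icc 0 T))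
    (hcne : ¬ c =ᵐ[volume.restrict (Set.Icc (0:ℝ) T)] 0)
    (hwne : ¬ w =ᵐ[volume.restrict (Set.Icc (0:ℝ) T)] 0)
    (hpos : (∀ᵐ t ∂volume, 0 < c t) ∨ (∀ᵐ t ∂volume, 0 < w t))
    (hα : MemM T ηb α) :
    (∀ β, MemM T ηb β → Phi T δ ηb c w α ≤ Phi T δ ηb c w β) ↔
      (∀ β, MemM T ηb β →
        (∫ t in (0:ℝ)..T, hfun T δ ηb c w α t * β t) ≤
          ∫ t in (0:ℝ)..T, hfun T δ ηb c w α t * α t) := by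
  have hαm : Measurable α := hα.1.measurable
  have hαb := memM_bounds hα
  have hTη : 0 < T * ηb := by positivity
  have habs : ∀ γ : ℝ → ℝ, MemM T ηb γ → ∀ t ∈ Set.Ioc (0:ℝ) T, |γ t| ≤ T * ηb := by
    intro γ hγ t ht
    rcases memM_bounds hγ t ht with ⟨h1, h2⟩
    rw [abs_of_nonneg h1]; exact h2
  have hPint : ∀ γ : ℝ → ℝ, Measurable γ →
      (∀ t ∈ Set.Ioc (0:ℝ) T, 0 ≤ γ t ∧ γ t ≤ T * ηb) →
      Integrable (Pf T δ ηb c w γ) (mu2 T) := by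
    intro γ hm hb
    have h := Pf_int hT hδ hη hc0 hcI hw0 hwI hm hb (u := fun _ => (1:ℝ))
      measurable_const (Mu := 1) (fun z _ => by norm_num)
    simpa using h
  have hPα : Integrable (Pf T δ ηb c w α) (mu2 T) := hPint α hαm hαb
  have hPu : ∀ u : ℝ × ℝ → ℝ, Measurable u → ∀ Mu : ℝ,
      (∀ z ∈ Set.Ioc (0:ℝ) T ×ˢ Set.Ioc (0:ℝ) T, |u z| ≤ Mu) →
      Integrable (fun z => Pf T δ ηb c w α z * u z) (mu2 T) :=
    fun u hu Mu hub => Pf_int hT hδ hη hc0 hcI hw0 hwI hαm hαb hu hub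
  -- integrability of the two "direction" integrands
  have hDint : ∀ β : ℝ → ℝ, MemM T ηb β →
      Integrable (fun z => Pf T δ ηb c w α z * ((β z.2 - α z.2) - (β z.1 - α z.1))) (mu2 T) := by
    intro β hβ
    refine hPu _ ((((hβ.1.measurable.comp measurable_snd).sub
      (hαm.comp measurable_snd))).sub ((hβ.1.measurable.comp measurable_fst).sub
      (hαm.comp measurable_fst))) (4 * (T * ηb)) ?_
    intro z hz
    have h1 := habs β hβ z.1 hz.1
    have h2 := habs β hβ z.2 hz.2
    have h3 := habs α hα z.1 hz.1
    have h4 := habs α hα z.2 hz.2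
    calc |(β z.2 - α z.2) - (β z.1 - α z.1)|
        ≤ |β z.2 - α z.2| + |β z.1 - α z.1| := abs_sub'' _ _
      _ ≤ (|β z.2| + |α z.2|) + (|β z.1| + |α z.1|) :=
          add_le_add (abs_sub'' _ _) (abs_sub'' _ _)
      _ ≤ 2 * (T * ηb) + 2 * (T * ηb) := by linarith
      _ = 4 * (T * ηb) := by ring
  have hbb : ∀ β : ℝ → ℝ, MemM T ηb β →
      Integrable (fun z => Pf T δ ηb c w α z * (β z.1 - β z.2)) (mu2 T) := by
    intro β hβ
    refine hPu _ ((hβ.1.measurable.comp measurable_fst).sub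
      (hβ.1.measurable.comp measurable_snd)) (2 * (T * ηb)) ?_
    intro z hz
    have h1 := habs β hβ z.1 hz.1
    have h2 := habs β hβ z.2 hz.2
    calc |β z.1 - β z.2| ≤ |β z.1| + |β z.2| := abs_sub'' _ _
      _ ≤ 2 * (T * ηb) := by linarith
  have hdiff : ∀ β : ℝ → ℝ, MemM T ηb β →
      (∫ t in (0:ℝ)..T, hfun T δ ηb c w α t * β t)
        - (∫ t in (0:ℝ)..T, hfun T δ ηb c w α t * α t)
      = ∫ z, Pf T δ ηb c w α z * ((β z.1 - α z.1) - (β z.2 - α z.2)) ∂(mu2 T) := by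
    intro β hβ
    rw [h_repr hT hδ hη hc0 hcI hw0 hwI hαm hαb hβ.1.measurable (habs β hβ),
      h_repr hT hδ hη hc0 hcI hw0 hwI hαm hαb hαm (habs α hα),
      ← MeasureTheory.integral_sub (hbb β hβ) (hbb α hα)]
    exact integral_congr_ae (Eventually.of_forall fun z => by ring)
  have hrel : ∀ β : ℝ → ℝ,
      (∫ z, Pf T δ ηb c w α z * ((β z.1 - α z.1) - (β z.2 - α z.2)) ∂(mu2 T))
        = - ∫ z, Pf T δ ηb c w α z * ((β z.2 - α z.2) - (β z.1 - α z.1)) ∂(mu2 T) := by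
    intro β
    rw [← MeasureTheory.integral_neg]
    exact integral_congr_ae (Eventually.of_forall fun z => by ring)
  have hQ0 : 0 ≤ ∫ z, Pf T δ ηb c w α z ∂(mu2 T) :=
    integral_nonneg fun z => Pf_nonneg hT hδ hη hc0 hw0 α z
  constructor
  · -- optimality implies the variational inequality
    intro hopt β hβ
    have hd := hdiff β hβ
    rw [← sub_nonpos, hd, hrel β, neg_nonpos]
    -- goal : 0 ≤ ∫ Pf * ((β₂-α₂)-(β₁-α₁))
    have hM1 : (0:ℝ) < 4 * (T * ηb) + 1 := by positivity
    have key : ∀ ε : ℝ, 0 < ε → ε ≤ min 1 (1 / (4 * (T * ηb) + 1)) →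
        0 ≤ ε * (∫ z, Pf T δ ηb c w α z * ((β z.2 - α z.2) - (β z.1 - α z.1)) ∂(mu2 T))
          + ε ^ 2 * ((4 * (T * ηb)) ^ 2 * ∫ z, Pf T δ ηb c w α z ∂(mu2 T)) := by
      intro ε hε1 hε2
      have hεle1 : ε ≤ 1 := hε2.trans (min_le_left _ _)
      have hεleM : ε ≤ 1 / (4 * (T * ηb) + 1) := hε2.trans (min_le_right _ _)
      have hγM : MemM T ηb (fun t => α t + ε * (β t - α t)) :=
        memM_convex hα hβ hε1.le hεle1
      have hγm : Measurable (fun t => α t + ε * (β t - α t)) := hγM.1.measurable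
      have hγb := memM_bounds hγM
      have hPγ : Integrable (Pf T δ ηb c w (fun t => α t + ε * (β t - α t))) (mu2 T) :=
        hPint _ hγm hγb
      have hopt' := hopt _ hγM
      rw [Phi_repr hT hPα, Phi_repr hT hPγ] at hopt'
      have hpt : ∀ᵐ z ∂(mu2 T), Pf T δ ηb c w (fun t => α t + ε * (β t - α t)) z
          ≤ Pf T δ ηb c w α z
            + ε * (Pf T δ ηb c w α z * ((β z.2 - α z.2) - (β z.1 - α z.1)))
            + ε ^ 2 * (4 * (T * ηb)) ^ 2 * Pf T δ ηb c w α z := by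
        filter_upwards [ae_square T] with z hz
        obtain ⟨hz1, hz2⟩ := hz
        have hr := Pf_ratio (T := T) (δ := δ) (ηb := ηb) (c := c) (w := w)
          (fun t => α t + ε * (β t - α t)) α z
        have hxeq : (((fun t => α t + ε * (β t - α t)) z.2) - α z.2)
            - (((fun t => α t + ε * (β t - α t)) z.1) - α z.1)
            = ε * ((β z.2 - α z.2) - (β z.1 - α z.1)) := by simp only; ring
        rw [hxeq] at hr
        have h1 := habs β hβ z.1 hz1
        have h2 := habs β hβ z.2 hz2
        have h3 := habs α hα z.1 hz1
        have h4 := habs α hα z.2 hz2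
        have hdb : |(β z.2 - α z.2) - (β z.1 - α z.1)| ≤ 4 * (T * ηb) := by
          calc |(β z.2 - α z.2) - (β z.1 - α z.1)|
              ≤ |β z.2 - α z.2| + |β z.1 - α z.1| := abs_sub'' _ _
            _ ≤ (|β z.2| + |α z.2|) + (|β z.1| + |α z.1|) :=
                add_le_add (abs_sub'' _ _) (abs_sub'' _ _)
            _ ≤ 2 * (T * ηb) + 2 * (T * ηb) := by linarith
            _ = 4 * (T * ηb) := by ring
        have hx1 : |ε * ((β z.2 - α z.2) - (β z.1 - α z.1))| ≤ 1 := by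
          rw [abs_mul, abs_of_pos hε1]
          calc ε * |(β z.2 - α z.2) - (β z.1 - α z.1)|
              ≤ (1 / (4 * (T * ηb) + 1)) * (4 * (T * ηb)) :=
                mul_le_mul hεleM hdb (abs_nonneg _) (by positivity)
            _ ≤ 1 := by
                rw [div_mul_eq_mul_div, div_le_one hM1]
                linarith
        have hexp := exp_quad hx1
        have hP0 : 0 ≤ Pf T δ ηb c w α z := Pf_nonneg hT hδ hη hc0 hw0 α z
        rw [hr]
        have hd2 : (ε * ((β z.2 - α z.2) - (β z.1 - α z.1))) ^ 2
            ≤ ε ^ 2 * (4 * (T * ηb)) ^ 2 := by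
          have h8 : |(β z.2 - α z.2) - (β z.1 - α z.1)| ^ 2 ≤ (4 * (T * ηb)) ^ 2 :=
            pow_le_pow_left₀ (abs_nonneg _) hdb 2
          rw [sq_abs] at h8
          nlinarith [sq_nonneg ε]
        nlinarith [mul_le_mul_of_nonneg_left hexp hP0, mul_le_mul_of_nonneg_left hd2 hP0]
      have hIα2 := hDint β hβ
      have hrhs : Integrable (fun z => Pf T δ ηb c w α z
          + ε * (Pf T δ ηb c w α z * ((β z.2 - α z.2) - (β z.1 - α z.1)))
          + ε ^ 2 * (4 * (T * ηb)) ^ 2 * Pf T δ ηb c w α z) (mu2 T) :=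
        (hPα.add (hIα2.const_mul ε)).add (hPα.const_mul (ε ^ 2 * (4 * (T * ηb)) ^ 2))
      have hle := integral_mono_ae hPγ hrhs hpt
      have H1 : Integrable (fun z => Pf T δ ηb c w α z
          + ε * (Pf T δ ηb c w α z * ((β z.2 - α z.2) - (β z.1 - α z.1)))) (mu2 T) :=
        hPα.add (hIα2.const_mul ε)
      have H2 : Integrable (fun z => ε ^ 2 * (4 * (T * ηb)) ^ 2 * Pf T δ ηb c w α z)
          (mu2 T) := hPα.const_mul (ε ^ 2 * (4 * (T * ηb)) ^ 2)
      have H3 : Integrable (fun z => ε * (Pf T δ ηb c w α z *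
          ((β z.2 - α z.2) - (β z.1 - α z.1)))) (mu2 T) := hIα2.const_mul ε
      rw [MeasureTheory.integral_add H1 H2, MeasureTheory.integral_add hPα H3,
        MeasureTheory.integral_const_mul, MeasureTheory.integral_const_mul] at hle
      nlinarith [hopt', hle]
    by_contra hcon
    push_neg at hcon
    set J : ℝ := ∫ z, Pf T δ ηb c w α z * ((β z.2 - α z.2) - (β z.1 - α z.1)) ∂(mu2 T)
      with hJdef
    set Q : ℝ := ∫ z, Pf T δ ηb c w α z ∂(mu2 T) with hQdef
    set K : ℝ := (4 * (T * ηb)) ^ 2 * Q with hKdef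
    have hK0 : 0 ≤ K := by rw [hKdef]; exact mul_nonneg (by positivity) hQ0
    set ε : ℝ := min (min 1 (1 / (4 * (T * ηb) + 1))) ((-J) / (2 * (K + 1))) with hεdef
    have hεpos : 0 < ε := by
      rw [hεdef]
      exact lt_min (lt_min one_pos (by positivity)) (div_pos (by linarith) (by linarith))
    have h1 := key ε hεpos (by rw [hεdef]; exact min_le_left _ _)
    have h2 : ε ≤ (-J) / (2 * (K + 1)) := by rw [hεdef]; exact min_le_right _ _
    have h3 : ε * (2 * (K + 1)) ≤ -J := by
      rw [← le_div_iff₀ (by linarith : (0:ℝ) < 2 * (K + 1))]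
      exact h2
    have h5 : ε * (-J) ≤ ε * (ε * K) := by nlinarith [h1]
    have h4 := (mul_le_mul_iff_right₀ hεpos).mp h5
    nlinarith [h3, h4, mul_nonneg hεpos.le hK0, hεpos]
  · -- the variational inequality implies optimality
    intro hVI β hβ
    have hd := hdiff β hβ
    have hI : (∫ z, Pf T δ ηb c w α z * ((β z.1 - α z.1) - (β z.2 - α z.2)) ∂(mu2 T)) ≤ 0 := by
      have h := hVI β hβ
      linarith
    have hIneg : 0 ≤ ∫ z, Pf T δ ηb c w α z *
        ((β z.2 - α z.2) - (β z.1 - α z.1)) ∂(mu2 T) := by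
      have h := hrel β
      linarith
    have hPβ : Integrable (Pf T δ ηb c w β) (mu2 T) :=
      hPint β hβ.1.measurable (memM_bounds hβ)
    rw [Phi_repr hT hPα, Phi_repr hT hPβ]
    have hpt : ∀ᵐ z ∂(mu2 T), Pf T δ ηb c w α z
        + Pf T δ ηb c w α z * ((β z.2 - α z.2) - (β z.1 - α z.1))
        ≤ Pf T δ ηb c w β z := by
      apply Eventually.of_forall
      intro z
      have hr := Pf_ratio (T := T) (δ := δ) (ηb := ηb) (c := c) (w := w) β α z
      have hP0 : 0 ≤ Pf T δ ηb c w α z := Pf_nonneg hT hδ hη hc0 hw0 α z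
      have he := Real.add_one_le_exp ((β z.2 - α z.2) - (β z.1 - α z.1))
      rw [hr]
      nlinarith [mul_le_mul_of_nonneg_left he hP0]
    have HL : Integrable (fun z => Pf T δ ηb c w α z
        + Pf T δ ηb c w α z * ((β z.2 - α z.2) - (β z.1 - α z.1))) (mu2 T) :=
      hPα.add (hDint β hβ)
    have hle := integral_mono_ae HL hPβ hpt
    rw [MeasureTheory.integral_add hPα (hDint β hβ)] at hle
    linarith
end

section
/- If F : [a,b] → ℝ is continuous, F'(t) exists and is finite at all points except a countable set, and F' (defined a.e.) belongs to L¹[a,b], then F is absolutely continuous on [a,b]. -/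
open MeasureTheory intervalIntegral Set

theorem stmt12 (a b : ℝ) (hab : a < b) (F F' : ℝ → ℝ)
    (hF : ContinuousOn F (Set.Icc a b))
    (hd : ∃ E : Set ℝ, E.Countable ∧ ∀ t ∈ Set.Ioo a b \ E, HasDerivAt F (F' t) t)
    (hI : IntegrableOn F' (Set.Icc a b)) :
    ∀ x ∈ Set.Icc a b, F x = F a + ∫ t in a..x, F' t := by
  obtain ⟨E, hE, hdd⟩ := hd
  intro x hx
  have h1 : ∫ t in a..x, F' t = F x - F a := by
    apply integral_eq_of_hasDerivAt_off_countable_of_le F F' hx.1 hE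
    · exact hF.mono (Icc_subset_Icc le_rfl hx.2)
    · intro t ht
      exact hdd t ⟨⟨ht.1.1, ht.1.2.trans_le hx.2⟩, ht.2⟩
    · exact (intervalIntegrable_iff_integrableOn_Icc_of_le hx.1).mpr (hI.mono_set (Icc_subset_Icc le_rfl hx.2))
  rw [h1]; ring
end

section
/- For any absolutely continuous u ∈ C(T) (continuous T-periodic) and any α ∈ M(T, η̄) with S = S[α]: ∫₀ᵀ (w(t)/c(t)) S(t)² u'(t) dt = ∫₀ᵀ h[α](t) [u(t) + S(t) u'(t)/c(t)] dt. -/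
open MeasureTheory intervalIntegral Real Set Filter Topology

-- integrable * bounded-measurable is integrable on a set
lemma IntOn.mul_bdd {f X : ℝ → ℝ} {s : Set ℝ} (hs : MeasurableSet s)
    (hf : IntegrableOn f s) (hX : AEStronglyMeasurable X (volume.restrict s))
    {C : ℝ} (hC : ∀ x ∈ s, ‖X x‖ ≤ C) : IntegrableOn (fun x => f x * X x) s := by
  have : IntegrableOn (fun x => X x * f x) s := by
    refine Integrable.bdd_mul (c := C) hf hX ?_
    exact (ae_restrict_iff' hs).2 (ae_of_all _ hC)
  exact this.congr_fun (fun x _ => mul_comm _ _) hs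

lemma prodlem (t : ℝ) (ht : 0 ≤ t) (f g : ℝ → ℝ)
    (hf : IntegrableOn f (Ioc 0 t)) (hg : IntegrableOn g (Ioc 0 t)) :
    (∫ s in (0:ℝ)..t, f s * ∫ r in (0:ℝ)..s, g r) +
      (∫ s in (0:ℝ)..t, g s * ∫ r in (0:ℝ)..s, f r) =
      (∫ s in (0:ℝ)..t, f s) * ∫ s in (0:ℝ)..t, g s := by
  have hmeas : MeasurableSet (Ioc (0:ℝ) t) := measurableSet_Ioc
  set Gg : ℝ → ℝ := fun s => ∫ r in Ioc (0:ℝ) s, g r with hGg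
  set Gf : ℝ → ℝ := fun s => ∫ r in Ioc (0:ℝ) s, f r with hGf
  have hgIcc : IntegrableOn g (Icc 0 t) := (integrableOn_Icc_iff_integrableOn_Ioc).2 hg
  have hfIcc : IntegrableOn f (Icc 0 t) := (integrableOn_Icc_iff_integrableOn_Ioc).2 hf
  have hGgc : ContinuousOn Gg (Icc 0 t) := continuousOn_primitive hgIcc
  have hGfc : ContinuousOn Gf (Icc 0 t) := continuousOn_primitive hfIcc
  obtain ⟨Cg, hCg⟩ : ∃ C, ∀ x ∈ Icc (0:ℝ) t, ‖Gg x‖ ≤ C := by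
    rcases (isCompact_Icc.exists_bound_of_continuousOn hGgc) with ⟨C, hC⟩
    exact ⟨C, hC⟩
  have hGgm : AEStronglyMeasurable Gg (volume.restrict (Ioc 0 t)) :=
    (hGgc.mono Ioc_subset_Icc_self).aestronglyMeasurable hmeas
  have hInt1 : IntegrableOn (fun s => f s * Gg s) (Ioc 0 t) :=
    IntOn.mul_bdd hmeas hf hGgm (fun x hx => hCg x (Ioc_subset_Icc_self hx))
  have hsplit : ∀ s ∈ Ioc (0:ℝ) t, (∫ r in Icc s t, g r) = (∫ r in Ioc 0 t, g r) - Gg s := by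
    intro s hs
    have h1 : Ioc (0:ℝ) s ∪ Ioc s t = Ioc 0 t := Ioc_union_Ioc_eq_Ioc (le_of_lt hs.1) hs.2
    have h2 : (∫ r in Ioc (0:ℝ) t, g r) = Gg s + ∫ r in Ioc s t, g r := by
      rw [← h1, setIntegral_union (Set.Ioc_disjoint_Ioc_of_le le_rfl) measurableSet_Ioc
        (hg.mono_set (by rw [← h1]; exact subset_union_left))
        (hg.mono_set (by rw [← h1]; exact subset_union_right))]
    rw [integral_Icc_eq_integral_Ioc, h2]; ring
  -- Fubini for second term
  have key2 : (∫ s in Ioc (0:ℝ) t, g s * Gf s) =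
      ∫ s in Ioc (0:ℝ) t, f s * ∫ r in Icc s t, g r := by
    set φ : ℝ → ℝ → ℝ := fun s r => g s * (Iic s).indicator f r with hφ
    have hφeq : Function.uncurry φ = {p : ℝ × ℝ | p.2 ≤ p.1}.indicator
        (fun p : ℝ × ℝ => g p.1 * f p.2) := by
      ext p
      simp only [Function.uncurry, hφ, Set.indicator, Set.mem_Iic, Set.mem_setOf_eq]
      by_cases h : p.2 ≤ p.1 <;> simp [h]
    have hint : Integrable (Function.uncurry φ)
        ((volume.restrict (Ioc 0 t)).prod (volume.restrict (Ioc 0 t))) := by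
      rw [hφeq]
      exact (Integrable.mul_prod hg hf).indicator
        (measurableSet_le measurable_snd measurable_fst)
    have swap := MeasureTheory.integral_integral_swap hint
    have l1 : ∀ s ∈ Ioc (0:ℝ) t, (∫ r in Ioc (0:ℝ) t, φ s r) = g s * Gf s := by
      intro s hs
      simp only [hφ]
      rw [MeasureTheory.integral_const_mul, setIntegral_indicator measurableSet_Iic]
      have hset : Ioc 0 t ∩ Iic s = Ioc 0 s := by
        ext x
        simp only [mem_inter_iff, mem_Iic, mem_Ioc]
        constructor
        · rintro ⟨⟨h1, h2⟩, h3⟩; exact ⟨h1, h3⟩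
        · rintro ⟨h1, h2⟩; exact ⟨⟨h1, le_trans h2 hs.2⟩, h2⟩
      rw [hset]
    have l2 : ∀ r ∈ Ioc (0:ℝ) t, (∫ s in Ioc (0:ℝ) t, φ s r) =
        f r * ∫ s in Icc r t, g s := by
      intro r hr
      have : ∀ s, φ s r = (Ici r).indicator (fun s' => g s' * f r) s := by
        intro s
        simp only [hφ, Set.indicator, Set.mem_Iic, Set.mem_Ici]
        by_cases h : r ≤ s <;> simp [h]
      rw [integral_congr_ae (ae_of_all _ this), setIntegral_indicator measurableSet_Ici]
      have hset : Ioc 0 t ∩ Ici r = Icc r t := by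
        ext x
        simp only [mem_inter_iff, mem_Ici, mem_Ioc, mem_Icc]
        constructor
        · rintro ⟨⟨h1, h2⟩, h3⟩; exact ⟨h3, h2⟩
        · rintro ⟨h1, h2⟩; exact ⟨⟨lt_of_lt_of_le hr.1 h1, h2⟩, h1⟩
      rw [hset, MeasureTheory.integral_mul_const]
      exact mul_comm _ _
    calc (∫ s in Ioc (0:ℝ) t, g s * Gf s)
        = ∫ s in Ioc (0:ℝ) t, ∫ r in Ioc (0:ℝ) t, φ s r := by
          exact (setIntegral_congr_fun hmeas (fun s hs => (l1 s hs).symm))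
      _ = ∫ r in Ioc (0:ℝ) t, ∫ s in Ioc (0:ℝ) t, φ s r := swap
      _ = ∫ s in Ioc (0:ℝ) t, f s * ∫ r in Icc s t, g r := by
          exact (setIntegral_congr_fun hmeas (fun r hr => l2 r hr))
  -- assemble
  have e0 : ∀ s ∈ Ioc (0:ℝ) t, (∫ r in (0:ℝ)..s, g r) = Gg s := by
    intro s hs; rw [intervalIntegral.integral_of_le (le_of_lt hs.1)]
  have e0f : ∀ s ∈ Ioc (0:ℝ) t, (∫ r in (0:ℝ)..s, f r) = Gf s := by
    intro s hs; rw [intervalIntegral.integral_of_le (le_of_lt hs.1)]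
  rw [intervalIntegral.integral_of_le ht, intervalIntegral.integral_of_le ht,
      intervalIntegral.integral_of_le ht, intervalIntegral.integral_of_le ht]
  have r1 : (∫ s in Ioc (0:ℝ) t, f s * ∫ r in (0:ℝ)..s, g r)
      = ∫ s in Ioc (0:ℝ) t, f s * Gg s :=
    setIntegral_congr_fun hmeas (fun s hs => by rw [e0 s hs])
  have hInt2 : IntegrableOn (fun s => f s * ((∫ r in Ioc (0:ℝ) t, g r) - Gg s)) (Ioc 0 t) := by
    refine IntOn.mul_bdd hmeas hf (aestronglyMeasurable_const.sub hGgm)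
      (C := ‖∫ r in Ioc (0:ℝ) t, g r‖ + Cg) (fun x hx => ?_)
    calc ‖(∫ r in Ioc (0:ℝ) t, g r) - Gg x‖ ≤ ‖∫ r in Ioc (0:ℝ) t, g r‖ + ‖Gg x‖ :=
        norm_sub_le _ _
      _ ≤ ‖∫ r in Ioc (0:ℝ) t, g r‖ + Cg := by
          have := hCg x (Ioc_subset_Icc_self hx); linarith
  have r2 : (∫ s in Ioc (0:ℝ) t, g s * ∫ r in (0:ℝ)..s, f r)
      = ∫ s in Ioc (0:ℝ) t, f s * ((∫ r in Ioc (0:ℝ) t, g r) - Gg s) := by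
    rw [setIntegral_congr_fun hmeas (fun s hs => by rw [e0f s hs] :
        ∀ s ∈ Ioc (0:ℝ) t, g s * ∫ r in (0:ℝ)..s, f r = g s * Gf s)]
    rw [key2]
    exact setIntegral_congr_fun hmeas (fun s hs => by rw [hsplit s hs])
  rw [r1, r2, ← integral_add hInt1 hInt2]
  have : ∀ s ∈ Ioc (0:ℝ) t, f s * Gg s + f s * ((∫ r in Ioc (0:ℝ) t, g r) - Gg s)
      = f s * ∫ r in Ioc (0:ℝ) t, g r := fun s _ => by ring
  rw [setIntegral_congr_fun hmeas this, MeasureTheory.integral_mul_const]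

lemma AB {x : ℝ} (hx : 0 < x) :
    (1 - Real.exp (-x))⁻¹ = (Real.exp x - 1)⁻¹ + 1 := by
  have h2 : Real.exp x - 1 ≠ 0 := by
    have := Real.one_lt_exp_iff.mpr hx; linarith
  have h3 : 1 - Real.exp (-x) ≠ 0 := by
    have := Real.exp_lt_one_iff.mpr (neg_lt_zero.mpr hx); linarith
  have h1 : Real.exp x ≠ 0 := (Real.exp_pos x).ne'
  rw [Real.exp_neg] at *
  field_simp at *
  ring


lemma keval1 {T δ ηb t : ℝ} (hT : 0 < T) (hx : 0 < (ηb + δ) * T) (φ : ℝ → ℝ)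
    (hφ : IntegrableOn φ (Ioc 0 T)) (ht : t ∈ Icc (0:ℝ) T) :
    (∫ r in (0:ℝ)..T, Kker T δ ηb t r * φ r) =
      (Real.exp ((ηb + δ) * T) - 1)⁻¹ * (∫ r in (0:ℝ)..T, φ r) + ∫ r in (0:ℝ)..t, φ r := by
  set B := (Real.exp ((ηb + δ) * T) - 1)⁻¹ with hB
  have hK : ∀ r, Kker T δ ηb t r * φ r = B * φ r + (Iio t).indicator φ r := by
    intro r
    unfold Kker
    by_cases h : r < t
    · rw [if_pos h, Set.indicator_of_mem (by exact h)]
      rw [show -(ηb + δ) * T = -((ηb + δ) * T) by ring, AB hx]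
      ring
    · rw [if_neg h, Set.indicator_of_notMem (by exact h)]
      ring
  have hφII : IntervalIntegrable φ volume 0 T :=
    (intervalIntegrable_iff_integrableOn_Ioc_of_le hT.le).2 hφ
  have h1 : IntervalIntegrable (fun r => B * φ r) volume 0 T := hφII.const_mul B
  have h2 : IntervalIntegrable ((Iio t).indicator φ) volume 0 T :=
    (intervalIntegrable_iff_integrableOn_Ioc_of_le hT.le).2
      (hφ.indicator measurableSet_Iio)
  rw [intervalIntegral.integral_congr (fun r _ => hK r),
      intervalIntegral.integral_add h1 h2, intervalIntegral.integral_const_mul]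
  congr 1
  rw [intervalIntegral.integral_of_le hT.le, setIntegral_indicator measurableSet_Iio]
  have hset : Ioc 0 T ∩ Iio t = Ioo 0 t := by
    ext x
    simp only [mem_inter_iff, mem_Ioc, mem_Iio, mem_Ioo]
    constructor
    · rintro ⟨⟨a, b⟩, cc⟩; exact ⟨a, cc⟩
    · rintro ⟨a, b⟩; exact ⟨⟨a, le_trans b.le ht.2⟩, b⟩
  rw [hset, ← integral_Ioc_eq_integral_Ioo, ← intervalIntegral.integral_of_le ht.1]

lemma keval2 {T δ ηb t : ℝ} (hT : 0 < T) (hx : 0 < (ηb + δ) * T) (φ : ℝ → ℝ)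
    (hφ : IntegrableOn φ (Ioc 0 T)) (ht : t ∈ Icc (0:ℝ) T) :
    (∫ r in (0:ℝ)..T, Kker T δ ηb r t * φ r) =
      ((Real.exp ((ηb + δ) * T) - 1)⁻¹ + 1) * (∫ r in (0:ℝ)..T, φ r) - ∫ r in (0:ℝ)..t, φ r := by
  set B := (Real.exp ((ηb + δ) * T) - 1)⁻¹ with hB
  have hK : ∀ r, Kker T δ ηb r t * φ r = B * φ r + (Ioi t).indicator φ r := by
    intro r
    unfold Kker
    by_cases h : t < r
    · rw [if_pos h, Set.indicator_of_mem (by exact h)]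
      rw [show -(ηb + δ) * T = -((ηb + δ) * T) by ring, AB hx]
      ring
    · rw [if_neg h, Set.indicator_of_notMem (by exact h)]
      ring
  have hφII : IntervalIntegrable φ volume 0 T :=
    (intervalIntegrable_iff_integrableOn_Ioc_of_le hT.le).2 hφ
  have h1 : IntervalIntegrable (fun r => B * φ r) volume 0 T := hφII.const_mul B
  have h2 : IntervalIntegrable ((Ioi t).indicator φ) volume 0 T :=
    (intervalIntegrable_iff_integrableOn_Ioc_of_le hT.le).2
      (hφ.indicator measurableSet_Ioi)
  rw [intervalIntegral.integral_congr (fun r _ => hK r),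
      intervalIntegral.integral_add h1 h2, intervalIntegral.integral_const_mul]
  have hset : Ioc 0 T ∩ Ioi t = Ioc t T := by
    ext x
    simp only [mem_inter_iff, mem_Ioc, mem_Ioi]
    constructor
    · rintro ⟨⟨a, b⟩, cc⟩; exact ⟨cc, b⟩
    · rintro ⟨a, b⟩; exact ⟨⟨lt_of_le_of_lt ht.1 a, b⟩, a⟩
  have h3 : (∫ r in (0:ℝ)..T, (Ioi t).indicator φ r) = ∫ r in t..T, φ r := by
    rw [intervalIntegral.integral_of_le hT.le, setIntegral_indicator measurableSet_Ioi,
        hset, ← intervalIntegral.integral_of_le ht.2]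
  have h4 : (∫ r in t..T, φ r) = (∫ r in (0:ℝ)..T, φ r) - ∫ r in (0:ℝ)..t, φ r := by
    have hφII2 : IntervalIntegrable φ volume 0 t :=
      hφII.mono_set (by rw [uIcc_of_le ht.1, uIcc_of_le hT.le]; exact Icc_subset_Icc le_rfl ht.2)
    rw [← intervalIntegral.integral_interval_sub_left hφII hφII2]
  rw [h3, h4]
  ring

lemma mulcont {ψ X : ℝ → ℝ} {T : ℝ}
    (hψ : IntegrableOn ψ (Ioc 0 T)) (hX : ContinuousOn X (Icc 0 T)) :
    IntegrableOn (fun s => ψ s * X s) (Ioc 0 T) := by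
  obtain ⟨C, hC⟩ := isCompact_Icc.exists_bound_of_continuousOn hX
  exact IntOn.mul_bdd measurableSet_Ioc hψ
    ((hX.mono Ioc_subset_Icc_self).aestronglyMeasurable measurableSet_Ioc)
    (fun x hx => hC x (Ioc_subset_Icc_self hx))

theorem stmt14 (T δ ηb : ℝ) (c w α u u' : ℝ → ℝ)
    (hT : 0 < T) (hδ : 0 < δ) (hη : 0 < ηb)
    (hcpos : ∀ t, 0 < c t) (hcP : ∀ t, c (t + T) = c t) (hcI : IntegrableOn c (Set.Icc 0 T))
    (hw0 : ∀ t, 0 ≤ w t) (hwP : ∀ t, w (t + T) = w t) (hwI : IntegrableOn w (Set.Icc 0 T))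
    (hα : MemM T ηb α)
    (huP : ∀ t, u (t + T) = u t)
    (hu'I : LocallyIntegrable u')
    (huAC : ∀ t, u t = u 0 + ∫ s in (0:ℝ)..t, u' s) :
    (∫ t in (0:ℝ)..T, w t / c t * (Sfun T δ ηb c α t) ^ 2 * u' t) =
      ∫ t in (0:ℝ)..T, hfun T δ ηb c w α t * (u t + Sfun T δ ηb c α t * u' t / c t) := by
  obtain ⟨hmono, hrc, hα0, hαP, hαT⟩ := hα
  have hαm : Measurable α := hmono.measurable
  have hx : 0 < (ηb + δ) * T := mul_pos (add_pos hη hδ) hT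
  set B : ℝ := (Real.exp ((ηb + δ) * T) - 1)⁻¹ with hBdef
  set E : ℝ → ℝ := fun r => Real.exp (α r + δ * r) with hEdef
  set F : ℝ → ℝ := fun r => Real.exp (-(α r) - δ * r) with hFdef
  set g0 : ℝ → ℝ := fun r => c r * E r with hg0def
  set m0 : ℝ → ℝ := fun r => w r * F r with hm0def
  have hEm : Measurable E := (hαm.add (measurable_id.const_mul δ)).exp
  have hFm : Measurable F := ((hαm.neg).sub (measurable_id.const_mul δ)).exp
  -- integrability of g0, m0
  have hg0I : IntegrableOn g0 (Ioc 0 T) := by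
    refine IntOn.mul_bdd measurableSet_Ioc (hcI.mono_set Ioc_subset_Icc_self)
      hEm.aestronglyMeasurable (C := Real.exp (T * ηb + δ * T)) (fun x hx' => ?_)
    rw [hEdef, Real.norm_eq_abs, abs_of_pos (Real.exp_pos _)]
    apply Real.exp_le_exp.2
    have h1 : α x ≤ T * ηb := hαT ▸ hmono hx'.2
    have h2 : δ * x ≤ δ * T := by nlinarith [hx'.2, hδ.le]
    linarith
  have hm0I : IntegrableOn m0 (Ioc 0 T) := by
    refine IntOn.mul_bdd measurableSet_Ioc (hwI.mono_set Ioc_subset_Icc_self)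
      hFm.aestronglyMeasurable (C := 1) (fun x hx' => ?_)
    rw [hFdef, Real.norm_eq_abs, abs_of_pos (Real.exp_pos _)]
    calc Real.exp (-(α x) - δ * x) ≤ Real.exp 0 := by
          apply Real.exp_le_exp.2
          have h1 : 0 ≤ α x := hα0 ▸ hmono hx'.1.le
          nlinarith [hx'.1.le, hδ.le]
      _ = 1 := Real.exp_zero
  set Gc : ℝ → ℝ := fun t => ∫ r in (0:ℝ)..t, g0 r with hGcdef
  set Gm : ℝ → ℝ := fun t => ∫ r in (0:ℝ)..t, m0 r with hGmdef
  set If : ℝ → ℝ := fun t => B * Gc T + Gc t with hIfdef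
  set Jf : ℝ → ℝ := fun t => (B + 1) * Gm T - Gm t with hJfdef
  set Hf : ℝ → ℝ := fun t => B * Gc T * Gm t - (B + 1) * Gm T * Gc t + Gc t * Gm t with hHfdef
  set U : ℝ → ℝ := fun t => ∫ s in (0:ℝ)..t, u' s with hUdef
  -- continuity
  have hGcc : ContinuousOn Gc (Icc 0 T) := by
    have := intervalIntegral.continuousOn_primitive_interval (a := (0:ℝ)) (b := T) (μ := volume)
      (f := g0) (by rw [uIcc_of_le hT.le]; exact (integrableOn_Icc_iff_integrableOn_Ioc).2 hg0I)
    rwa [uIcc_of_le hT.le] at this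
  have hGmc : ContinuousOn Gm (Icc 0 T) := by
    have := intervalIntegral.continuousOn_primitive_interval (a := (0:ℝ)) (b := T) (μ := volume)
      (f := m0) (by rw [uIcc_of_le hT.le]; exact (integrableOn_Icc_iff_integrableOn_Ioc).2 hm0I)
    rwa [uIcc_of_le hT.le] at this
  have hu'Ioc : IntegrableOn u' (Ioc 0 T) :=
    (hu'I.integrableOn_isCompact isCompact_Icc).mono_set Ioc_subset_Icc_self
  have hUc : ContinuousOn U (Icc 0 T) := by
    have := intervalIntegral.continuousOn_primitive_interval (a := (0:ℝ)) (b := T) (μ := volume)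
      (f := u') (by rw [uIcc_of_le hT.le]; exact (integrableOn_Icc_iff_integrableOn_Ioc).2 hu'Ioc)
    rwa [uIcc_of_le hT.le] at this
  have hIfc : ContinuousOn If (Icc 0 T) := continuousOn_const.add hGcc
  have hJfc : ContinuousOn Jf (Icc 0 T) := continuousOn_const.sub hGmc
  have hHfc : ContinuousOn Hf (Icc 0 T) :=
    ((continuousOn_const.mul hGmc).sub (continuousOn_const.mul hGcc)).add (hGcc.mul hGmc)
  have huc : ContinuousOn u (Icc 0 T) :=
    (continuousOn_const.add hUc).congr (fun t _ => huAC t)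
  -- structure identities
  have hS : ∀ t ∈ Icc (0:ℝ) T, Sfun T δ ηb c α t = F t * If t := by
    intro t ht
    show Real.exp (-(α t) - δ * t) * _ = _
    rw [intervalIntegral.integral_congr
        (g := fun r => Kker T δ ηb t r * g0 r) (fun r _ => (mul_assoc _ _ _)),
      keval1 hT hx g0 hg0I ht]
  have hh : ∀ t ∈ Icc (0:ℝ) T, hfun T δ ηb c w α t = m0 t * If t - g0 t * Jf t := by
    intro t ht
    show w t * Real.exp (-(α t) - δ * t) * _ - c t * Real.exp (α t + δ * t) * _ = _
    rw [intervalIntegral.integral_congr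
        (g := fun r => Kker T δ ηb t r * g0 r) (fun r _ => (mul_assoc _ _ _)),
      intervalIntegral.integral_congr
        (g := fun r => Kker T δ ηb r t * m0 r) (fun r _ => (mul_assoc _ _ _)),
      keval1 hT hx g0 hg0I ht, keval2 hT hx m0 hm0I ht]
  -- interval integrability helpers
  have hIocT : ∀ {f : ℝ → ℝ}, IntegrableOn f (Ioc 0 T) → IntervalIntegrable f volume 0 T :=
    fun h => (intervalIntegrable_iff_integrableOn_Ioc_of_le hT.le).2 h
  have hexpI : IntegrableOn (fun s => m0 s * If s - g0 s * Jf s) (Ioc 0 T) :=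
    (mulcont hm0I hIfc).sub (mulcont hg0I hJfc)
  have hu'HfI : IntegrableOn (fun s => u' s * Hf s) (Ioc 0 T) := mulcont hu'Ioc hHfc
  have hKI : IntegrableOn (fun t => If t * Jf t * u' t) (Ioc 0 T) := by
    have h1 : IntegrableOn (fun t => u' t * (If t * Jf t)) (Ioc 0 T) :=
      mulcont hu'Ioc (hIfc.mul hJfc)
    exact h1.congr_fun (fun t _ => by ring) measurableSet_Ioc
  have hU0 : (∫ s in (0:ℝ)..T, u' s) = 0 := by
    have h1 := huAC T
    have h2 : u T = u 0 := by have := huP 0; rwa [zero_add] at this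
    rw [h2] at h1
    linarith
  have hHh : ∀ t ∈ Icc (0:ℝ) T, (∫ s in (0:ℝ)..t, (m0 s * If s - g0 s * Jf s)) = Hf t := by
    intro t ht
    have hsub : Ioc (0:ℝ) t ⊆ Ioc 0 T := Ioc_subset_Ioc le_rfl ht.2
    have hm0t : IntegrableOn m0 (Ioc 0 t) := hm0I.mono_set hsub
    have hg0t : IntegrableOn g0 (Ioc 0 t) := hg0I.mono_set hsub
    have hpl := prodlem t ht.1 m0 g0 hm0t hg0t
    have hpl' : (∫ s in (0:ℝ)..t, m0 s * Gc s) + (∫ s in (0:ℝ)..t, g0 s * Gm s)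
        = Gm t * Gc t := hpl
    have e : ∀ s, m0 s * If s - g0 s * Jf s =
        ((B * Gc T) * m0 s - ((B + 1) * Gm T) * g0 s) + (m0 s * Gc s + g0 s * Gm s) := by
      intro s; simp only [hIfdef, hJfdef]; ring
    have iiM : IntervalIntegrable m0 volume 0 t :=
      (intervalIntegrable_iff_integrableOn_Ioc_of_le ht.1).2 hm0t
    have iiG : IntervalIntegrable g0 volume 0 t :=
      (intervalIntegrable_iff_integrableOn_Ioc_of_le ht.1).2 hg0t
    have iiMGc : IntervalIntegrable (fun s => m0 s * Gc s) volume 0 t :=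
      (intervalIntegrable_iff_integrableOn_Ioc_of_le ht.1).2
        ((mulcont hm0I hGcc).mono_set hsub)
    have iiGGm : IntervalIntegrable (fun s => g0 s * Gm s) volume 0 t :=
      (intervalIntegrable_iff_integrableOn_Ioc_of_le ht.1).2
        ((mulcont hg0I hGmc).mono_set hsub)
    rw [intervalIntegral.integral_congr (fun s _ => e s),
        intervalIntegral.integral_add ((iiM.const_mul _).sub (iiG.const_mul _))
          (iiMGc.add iiGGm),
        intervalIntegral.integral_sub (iiM.const_mul _) (iiG.const_mul _),
        intervalIntegral.integral_const_mul, intervalIntegral.integral_const_mul,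
        intervalIntegral.integral_add iiMGc iiGGm, hpl',
        show (∫ s in (0:ℝ)..t, m0 s) = Gm t from rfl,
        show (∫ s in (0:ℝ)..t, g0 s) = Gc t from rfl]
    simp only [hHfdef]
    ring
  have hHfT : Hf T = 0 := by simp only [hHfdef]; ring
  have hinth : (∫ s in (0:ℝ)..T, (m0 s * If s - g0 s * Jf s)) = 0 := by
    rw [hHh T (right_mem_Icc.2 hT.le), hHfT]
  -- the core identity
  have core : (∫ t in (0:ℝ)..T, If t * Jf t * u' t)
      = ∫ t in (0:ℝ)..T, hfun T δ ηb c w α t * u t := by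
    have lhs1 : (∫ t in (0:ℝ)..T, If t * Jf t * u' t)
        = ∫ t in (0:ℝ)..T, ((B * Gc T * ((B + 1) * Gm T)) * u' t - u' t * Hf t) :=
      intervalIntegral.integral_congr
        (fun t _ => by simp only [hIfdef, hJfdef, hHfdef]; ring)
    have iiu' : IntervalIntegrable u' volume 0 T := hIocT hu'Ioc
    have iiu'H : IntervalIntegrable (fun t => u' t * Hf t) volume 0 T := hIocT hu'HfI
    have rhs1 : (∫ t in (0:ℝ)..T, hfun T δ ηb c w α t * u t)
        = ∫ t in (0:ℝ)..T, (u 0 * (m0 t * If t - g0 t * Jf t)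
            + (m0 t * If t - g0 t * Jf t) * U t) := by
      apply intervalIntegral.integral_congr
      intro t ht'
      rw [uIcc_of_le hT.le] at ht'
      show hfun T δ ηb c w α t * u t = _
      rw [hh t ht', huAC t, show (∫ s in (0:ℝ)..t, u' s) = U t from rfl]
      ring
    have iihexp : IntervalIntegrable (fun t => m0 t * If t - g0 t * Jf t) volume 0 T :=
      hIocT hexpI
    have iihU : IntervalIntegrable (fun t => (m0 t * If t - g0 t * Jf t) * U t) volume 0 T :=
      hIocT (mulcont hexpI hUc)
    have hpl := prodlem T hT.le (fun s => m0 s * If s - g0 s * Jf s) u' hexpI hu'Ioc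
    have h2 : (∫ s in (0:ℝ)..T, u' s * ∫ r in (0:ℝ)..s, (m0 r * If r - g0 r * Jf r))
        = ∫ s in (0:ℝ)..T, u' s * Hf s := by
      apply intervalIntegral.integral_congr
      intro s hs'
      rw [uIcc_of_le hT.le] at hs'
      show u' s * (∫ r in (0:ℝ)..s, (m0 r * If r - g0 r * Jf r)) = u' s * Hf s
      rw [hHh s hs']
    have h3 : (∫ s in (0:ℝ)..T, (m0 s * If s - g0 s * Jf s) * U s)
        = - ∫ s in (0:ℝ)..T, u' s * Hf s := by
      rw [← h2]
      simp only [hUdef]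
      beta_reduce at hpl
      rw [hinth, hU0] at hpl
      linarith
    rw [lhs1, intervalIntegral.integral_sub (iiu'.const_mul _) iiu'H,
        intervalIntegral.integral_const_mul, hU0, mul_zero, zero_sub,
        rhs1, intervalIntegral.integral_add (iihexp.const_mul _) iihU,
        intervalIntegral.integral_const_mul, hinth, mul_zero, zero_add, h3]
  -- final assembly
  set P : ℝ → ℝ := fun t => hfun T δ ηb c w α t * (Sfun T δ ηb c α t * u' t / c t) with hPdef
  have hLP : ∀ t ∈ Icc (0:ℝ) T, w t / c t * (Sfun T δ ηb c α t) ^ 2 * u' t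
      = If t * Jf t * u' t + P t := by
    intro t ht
    have hc : c t ≠ 0 := (hcpos t).ne'
    have hFne : F t ≠ 0 := (Real.exp_pos _).ne'
    have hEinv : E t = (F t)⁻¹ := by
      show Real.exp (α t + δ * t) = (Real.exp (-(α t) - δ * t))⁻¹
      rw [← Real.exp_neg]
      congr 1
      ring
    simp only [hPdef]
    rw [hh t ht, hS t ht]
    simp only [hm0def, hg0def, hEinv]
    field_simp
    ring
  have hRP : ∀ t, hfun T δ ηb c w α t * (u t + Sfun T δ ηb c α t * u' t / c t)
      = hfun T δ ηb c w α t * u t + P t := fun t => by rw [hPdef]; ring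
  have e1 : (∫ t in (0:ℝ)..T, w t / c t * (Sfun T δ ηb c α t) ^ 2 * u' t)
      = ∫ t in (0:ℝ)..T, (If t * Jf t * u' t + P t) :=
    intervalIntegral.integral_congr
      (fun t ht' => hLP t (by rwa [uIcc_of_le hT.le] at ht'))
  have e2 : (∫ t in (0:ℝ)..T, hfun T δ ηb c w α t * (u t + Sfun T δ ηb c α t * u' t / c t))
      = ∫ t in (0:ℝ)..T, (hfun T δ ηb c w α t * u t + P t) :=
    intervalIntegral.integral_congr (fun t _ => hRP t)
  rw [e1, e2]
  have iiK : IntervalIntegrable (fun t => If t * Jf t * u' t) volume 0 T := hIocT hKI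
  have iihu : IntervalIntegrable (fun t => hfun T δ ηb c w α t * u t) volume 0 T := by
    refine hIocT ((mulcont hexpI huc).congr_fun (fun t ht' => ?_) measurableSet_Ioc)
    rw [hh t (Ioc_subset_Icc_self ht')]
  by_cases hPint : IntervalIntegrable P volume 0 T
  · rw [intervalIntegral.integral_add iiK hPint,
        intervalIntegral.integral_add iihu hPint, core]
  · have h1 : ¬ IntervalIntegrable (fun t => If t * Jf t * u' t + P t) volume 0 T := by
      intro hcon
      have := hcon.sub iiK
      simp only [add_sub_cancel_left] at this
      exact hPint this
    have h2 : ¬ IntervalIntegrable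
        (fun t => hfun T δ ηb c w α t * u t + P t) volume 0 T := by
      intro hcon
      have := hcon.sub iihu
      simp only [add_sub_cancel_left] at this
      exact hPint this
    rw [intervalIntegral.integral_undef h1, intervalIntegral.integral_undef h2]
end
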